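/- Let 𝔤 be a differential graded Lie algebra over a field k of characteristic zero. The category of representations of 𝔤 admits a model structure in which weak equivalences are the quasi-isomorphisms (maps inducing isomorphisms on all cohomology groups) and fibrations are the degreewise surjective maps; in particular every object is fibrant. -/

import Mathlib

open TensorProduct

universe u

/-- Transport along an equality of degrees. -/
def gcast {C : ℤ → Type u} {i j : ℤ} (h : i = j) (x : C i) : C j := h ▸ x

/-- Transport along an equality of degrees, as a linear map. -/
def lgcast {K : Type u} [Field K] {C : ℤ → Type u} [∀ i, AddCommGroup (C i)]
    [∀ i, Module K (C i)] {i j : ℤ} (h : i = j) : C i →ₗ[K] C j :=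
  h ▸ LinearMap.id

/-- A differential graded Lie algebra over `K`, given by its graded pieces. -/
class DGLA (K : Type u) [Field K] (A : ℤ → Type u)
    [∀ i, AddCommGroup (A i)] [∀ i, Module K (A i)] where
  d : ∀ i, A i →ₗ[K] A (i + 1)
  bk : ∀ i j, A i →ₗ[K] A j →ₗ[K] A (i + j)
  d_sq : ∀ i (x : A i), d (i + 1) (d i x) = 0
  antisymm : ∀ i j (x : A i) (y : A j),
    bk j i y x = gcast (add_comm i j) (-(((-1 : K) ^ (i * j)) • bk i j x y))
  jacobi : ∀ p q r (x : A p) (y : A q) (z : A r),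
    bk p (q + r) x (bk q r y z)
      = gcast (show p + q + r = p + (q + r) by ring) (bk (p + q) r (bk p q x y) z)
        + ((-1 : K) ^ (p * q)) •
          gcast (show q + (p + r) = p + (q + r) by ring) (bk q (p + r) y (bk p r x z))
  leibniz : ∀ i j (x : A i) (y : A j),
    d (i + j) (bk i j x y)
      = gcast (show i + 1 + j = i + j + 1 by ring) (bk (i + 1) j (d i x) y)
        + ((-1 : K) ^ i) •
          gcast (show i + (j + 1) = i + j + 1 by ring) (bk i (j + 1) x (d j y))

/-- A representation of a differential graded Lie algebra, following Budur–Wang's sign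
convention `[x,y]v = x(yv) + (-1)^{pq} y(xv)`. -/
class DGLARep (K : Type u) [Field K] (A : ℤ → Type u)
    [∀ i, AddCommGroup (A i)] [∀ i, Module K (A i)] [DGLA K A]
    (V : ℤ → Type u) [∀ i, AddCommGroup (V i)] [∀ i, Module K (V i)] where
  dV : ∀ i, V i →ₗ[K] V (i + 1)
  ρ : ∀ p j, A p →ₗ[K] V j →ₗ[K] V (p + j)
  dV_sq : ∀ i (v : V i), dV (i + 1) (dV i v) = 0
  leibniz : ∀ p j (x : A p) (v : V j),
    dV (p + j) (ρ p j x v)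
      = gcast (show p + 1 + j = p + j + 1 by ring) (ρ (p + 1) j (DGLA.d (K := K) (A := A) p x) v)
        + ((-1 : K) ^ p) •
          gcast (show p + (j + 1) = p + j + 1 by ring) (ρ p (j + 1) x (dV j v))
  compat : ∀ p q j (x : A p) (y : A q) (v : V j),
    ρ (p + q) j (DGLA.bk (K := K) (A := A) p q x y) v
      = gcast (show p + (q + j) = p + q + j by ring) (ρ p (q + j) x (ρ q j y v))
        + ((-1 : K) ^ (p * q)) •
          gcast (show q + (p + j) = p + q + j by ring) (ρ q (p + j) y (ρ p j x v))

section RepCategory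

open CategoryTheory

variable (K : Type) [Field K] (A : ℤ → Type)
  [∀ i, AddCommGroup (A i)] [∀ i, Module K (A i)] [DGLA K A]

/-- An object of the category of representations of the dgla `𝔤`. -/
structure RepObj where
  V : ℤ → ModuleCat.{0} K
  dV : ∀ i, V i →ₗ[K] V (i + 1)
  ρ : ∀ p j, A p →ₗ[K] (V j →ₗ[K] V (p + j))
  dV_sq : ∀ i (v : V i), dV (i + 1) (dV i v) = 0
  leibniz : ∀ p j (x : A p) (v : V j),
    dV (p + j) (ρ p j x v)
      = gcast (C := fun i => V i) (show p + 1 + j = p + j + 1 by ring)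
          (ρ (p + 1) j (DGLA.d (K := K) (A := A) p x) v)
        + ((-1 : K) ^ p) •
          gcast (C := fun i => V i) (show p + (j + 1) = p + j + 1 by ring)
            (ρ p (j + 1) x (dV j v))
  compat : ∀ p q j (x : A p) (y : A q) (v : V j),
    ρ (p + q) j (DGLA.bk (K := K) (A := A) p q x y) v
      = gcast (C := fun i => V i) (show p + (q + j) = p + q + j by ring)
          (ρ p (q + j) x (ρ q j y v))
        + ((-1 : K) ^ (p * q)) •
          gcast (C := fun i => V i) (show q + (p + j) = p + q + j by ring)
            (ρ q (p + j) y (ρ p j x v))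

variable {K A}

/-- A morphism of representations of the dgla `𝔤`. -/
@[ext] structure RepHom (X Y : RepObj K A) where
  f : ∀ i, X.V i →ₗ[K] Y.V i
  comm_d : ∀ i (v : X.V i), f (i + 1) (X.dV i v) = Y.dV i (f i v)
  comm_ρ : ∀ p j (a : A p) (v : X.V j), f (p + j) (X.ρ p j a v) = Y.ρ p j a (f j v)

instance : Category (RepObj K A) where
  Hom X Y := RepHom X Y
  id X := ⟨fun i => LinearMap.id, fun _ _ => rfl, fun _ _ _ _ => rfl⟩
  comp φ ψ := ⟨fun i => (ψ.f i).comp (φ.f i),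
    by intro i v; simp [φ.comm_d, ψ.comm_d],
    by intro p j a v; simp [φ.comm_ρ, ψ.comm_ρ]⟩
  id_comp := by intros; rfl
  comp_id := by intros; rfl
  assoc := by intros; rfl

/-- A morphism of representations is a quasi-isomorphism if it induces a bijection on all
cohomology groups. -/
def RepHom.IsQis {X Y : RepObj K A} (φ : X ⟶ Y) : Prop :=
  (∀ (i : ℤ) (y : Y.V i), Y.dV i y = 0 →
    ∃ (x : X.V i) (z : Y.V (i - 1)), X.dV i x = 0 ∧
      φ.f i x = y + gcast (C := fun j => Y.V j) (show i - 1 + 1 = i by omega)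
        (Y.dV (i - 1) z)) ∧
  (∀ (i : ℤ) (x : X.V i), X.dV i x = 0 →
    (∃ z : Y.V (i - 1), φ.f i x
        = gcast (C := fun j => Y.V j) (show i - 1 + 1 = i by omega) (Y.dV (i - 1) z)) →
    ∃ w : X.V (i - 1),
      x = gcast (C := fun j => X.V j) (show i - 1 + 1 = i by omega) (X.dV (i - 1) w))

/-- A morphism of representations is a fibration if it is degreewise surjective. -/
def RepHom.IsSurj {X Y : RepObj K A} (φ : X ⟶ Y) : Prop :=
  ∀ i, Function.Surjective (φ.f i)

/-- `f` is a retract of `g`. -/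
def IsRetract {C : Type*} [Category C] {X Y X' Y' : C} (f : X ⟶ Y) (g : X' ⟶ Y') : Prop :=
  ∃ (iX : X ⟶ X') (rX : X' ⟶ X) (iY : Y ⟶ Y') (rY : Y' ⟶ Y),
    iX ≫ rX = 𝟙 X ∧ iY ≫ rY = 𝟙 Y ∧ iX ≫ g = f ≫ iY ∧ rX ≫ f = g ≫ rY

/-- A (Quillen) model structure on a category: three classes of maps (weak equivalences,
fibrations, cofibrations) satisfying two-out-of-three, closure under retracts, the lifting
axioms, and the factorization axioms. -/
structure ModelStructure (C : Type*) [Category C] where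
  W : ∀ ⦃X Y : C⦄, (X ⟶ Y) → Prop
  Fib : ∀ ⦃X Y : C⦄, (X ⟶ Y) → Prop
  Cof : ∀ ⦃X Y : C⦄, (X ⟶ Y) → Prop
  w_comp : ∀ {X Y Z : C} (f : X ⟶ Y) (g : Y ⟶ Z), W f → W g → W (f ≫ g)
  w_cancel_left : ∀ {X Y Z : C} (f : X ⟶ Y) (g : Y ⟶ Z), W (f ≫ g) → W f → W g
  w_cancel_right : ∀ {X Y Z : C} (f : X ⟶ Y) (g : Y ⟶ Z), W (f ≫ g) → W g → W f
  w_retract : ∀ {X Y X' Y' : C} (f : X ⟶ Y) (g : X' ⟶ Y'), IsRetract f g → W g → W f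
  fib_retract : ∀ {X Y X' Y' : C} (f : X ⟶ Y) (g : X' ⟶ Y'), IsRetract f g → Fib g → Fib f
  cof_retract : ∀ {X Y X' Y' : C} (f : X ⟶ Y) (g : X' ⟶ Y'), IsRetract f g → Cof g → Cof f
  lift : ∀ {P Q X Y : C} (i : P ⟶ Q) (p : X ⟶ Y), Cof i → Fib p → (W i ∨ W p) →
    ∀ (u : P ⟶ X) (v : Q ⟶ Y), u ≫ p = i ≫ v →
      ∃ h : Q ⟶ X, i ≫ h = u ∧ h ≫ p = v
  factor_cof_triv_fib : ∀ {X Y : C} (f : X ⟶ Y),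
    ∃ (Z : C) (i : X ⟶ Z) (p : Z ⟶ Y), Cof i ∧ Fib p ∧ W p ∧ i ≫ p = f
  factor_triv_cof_fib : ∀ {X Y : C} (f : X ⟶ Y),
    ∃ (Z : C) (i : X ⟶ Z) (p : Z ⟶ Y), Cof i ∧ W i ∧ Fib p ∧ i ≫ p = f

variable (K A)

/-- The zero representation. -/
noncomputable def zeroRep : RepObj K A where
  V := fun _ => ModuleCat.of K PUnit
  dV := fun _ => 0
  ρ := fun _ _ => 0
  dV_sq := by intros; rfl
  leibniz := by intros; apply Subsingleton.elim
  compat := by intros; apply Subsingleton.elim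


section Aux

variable {K A}

namespace Stmt16

/-! ### gcast utilities -/

lemma gcast_trans {C : ℤ → Type} {i j k : ℤ} (h : i = j) (h' : j = k) (x : C i) :
    gcast h' (gcast h x) = gcast (h.trans h') x := by subst h; subst h'; rfl

lemma lgcast_apply {C : ℤ → Type} [∀ n, AddCommGroup (C n)] [∀ n, Module K (C n)]
    {i j : ℤ} (h : i = j) (x : C i) :
    lgcast (K := K) (C := C) h x = gcast h x := by subst h; rfl

lemma gcast_add {C : ℤ → Type} [∀ n, AddCommGroup (C n)] {i j : ℤ} (h : i = j) (x y : C i) :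
    gcast (C := C) h (x + y) = gcast h x + gcast h y := by subst h; rfl

lemma gcast_zero {C : ℤ → Type} [∀ n, AddCommGroup (C n)] {i j : ℤ} (h : i = j) :
    gcast (C := C) h (0 : C i) = 0 := by subst h; rfl

lemma gcast_eq_zero_iff {C : ℤ → Type} [∀ n, AddCommGroup (C n)] {i j : ℤ} (h : i = j)
    (x : C i) : gcast (C := C) h x = 0 ↔ x = 0 := by subst h; exact Iff.rfl

lemma gcast_smul {C : ℤ → Type} [∀ n, AddCommGroup (C n)] [∀ n, Module K (C n)]
    {i j : ℤ} (h : i = j) (c : K) (x : C i) :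
    gcast (C := C) h (c • x) = c • gcast h x := by subst h; rfl

/-- naturality of `dV` with respect to `gcast`. -/
lemma dV_gcast (X : RepObj K A) {i j : ℤ} (h : i = j) (v : X.V i) :
    X.dV j (gcast (C := fun n => X.V n) h v)
      = gcast (C := fun n => X.V n) (by rw [h]) (X.dV i v) := by subst h; rfl

lemma f_gcast {X Y : RepObj K A} (φ : X ⟶ Y) {i j : ℤ} (h : i = j) (v : X.V i) :
    φ.f j (gcast (C := fun n => X.V n) h v)
      = gcast (C := fun n => Y.V n) h (φ.f i v) := by subst h; rfl

@[simp] lemma comp_f {X Y Z : RepObj K A} (φ : X ⟶ Y) (ψ : Y ⟶ Z) (i : ℤ) (v : X.V i) :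
    (φ ≫ ψ).f i v = ψ.f i (φ.f i v) := rfl

@[simp] lemma id_f (X : RepObj K A) (i : ℤ) (v : X.V i) :
    (𝟙 X : X ⟶ X).f i v = v := rfl

lemma hom_congr {X Y : RepObj K A} {α β : X ⟶ Y} (h : α = β) (i : ℤ) (x : X.V i) :
    α.f i x = β.f i x := by rw [h]

/-! ### the boundary map `bdr` -/

/-- The composite `V (i-1) → V i` of the differential with a degree cast. -/
noncomputable def bdr (X : RepObj K A) (i : ℤ) : X.V (i-1) →ₗ[K] X.V i :=
  (lgcast (K := K) (C := fun n => X.V n) (show i - 1 + 1 = i by omega)).comp (X.dV (i-1))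

lemma bdr_apply (X : RepObj K A) (i : ℤ) (z : X.V (i-1)) :
    bdr X i z = gcast (C := fun n => X.V n) (show i - 1 + 1 = i by omega)
      (X.dV (i-1) z) := lgcast_apply _ _

lemma gcast_d_eq_bdr (X : RepObj K A) (i : ℤ) (z : X.V (i-1)) :
    gcast (C := fun n => X.V n) (show i - 1 + 1 = i by omega) (X.dV (i-1) z)
      = bdr X i z := (bdr_apply X i z).symm

lemma f_bdr {X Y : RepObj K A} (φ : X ⟶ Y) (i : ℤ) (z : X.V (i-1)) :
    φ.f i (bdr X i z) = bdr Y i (φ.f (i-1) z) := by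
  rw [bdr_apply, bdr_apply, f_gcast, φ.comm_d]

lemma f_cycle {X Y : RepObj K A} (φ : X ⟶ Y) (i : ℤ) (x : X.V i)
    (hx : X.dV i x = 0) : Y.dV i (φ.f i x) = 0 := by
  rw [← φ.comm_d, hx, map_zero]

lemma bdr_cycle (X : RepObj K A) (i : ℤ) (z : X.V (i-1)) :
    X.dV i (bdr X i z) = 0 := by
  rw [bdr_apply, dV_gcast, X.dV_sq, gcast_zero]

lemma bdr_eq_zero_iff (X : RepObj K A) (i : ℤ) (z : X.V (i-1)) :
    bdr X i z = 0 ↔ X.dV (i-1) z = 0 := by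
  rw [bdr_apply, gcast_eq_zero_iff]

lemma bdr_bdr (X : RepObj K A) (i : ℤ) (z : X.V (i-1-1)) :
    bdr X i (bdr X (i-1) z) = 0 := by
  rw [bdr_eq_zero_iff]
  exact bdr_cycle X (i-1) z

lemma neg_one_zpow_succ (p : ℤ) : (-1:K)^(p+1) = -((-1:K)^p) := by
  rw [zpow_add₀ (by norm_num : (-1:K) ≠ 0), zpow_one, mul_neg_one]

lemma neg_one_zpow_mul_self (p : ℤ) : ((-1:K)^p) * ((-1:K)^p) = 1 := by
  rw [← mul_zpow]
  norm_num

lemma neg_one_zpow_add (p q : ℤ) : (-1:K)^(p+q) = (-1:K)^p * (-1:K)^q :=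
  zpow_add₀ (by norm_num : (-1:K) ≠ 0) p q

/-! ### `IsQis` restated via `bdr` -/

lemma isQis_iff {X Y : RepObj K A} (φ : X ⟶ Y) :
    RepHom.IsQis φ ↔
      ((∀ i (y : Y.V i), Y.dV i y = 0 →
          ∃ x z, X.dV i x = 0 ∧ φ.f i x = y + bdr Y i z) ∧
       (∀ i (x : X.V i), X.dV i x = 0 → (∃ z, φ.f i x = bdr Y i z) →
          ∃ w, x = bdr X i w)) := by
  unfold RepHom.IsQis
  simp only [gcast_d_eq_bdr]

/-! ### two-out-of-three and retracts for quasi-isomorphisms -/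

lemma qis_comp {X Y Z : RepObj K A} (φ : X ⟶ Y) (ψ : Y ⟶ Z)
    (hφ : RepHom.IsQis φ) (hψ : RepHom.IsQis ψ) : RepHom.IsQis (φ ≫ ψ) := by
  rw [isQis_iff] at hφ hψ ⊢
  constructor
  · intro i z hz
    obtain ⟨y, c, hy, hyc⟩ := hψ.1 i z hz
    obtain ⟨x, b, hx, hxb⟩ := hφ.1 i y hy
    refine ⟨x, c + ψ.f (i-1) b, hx, ?_⟩
    rw [comp_f, hxb, map_add, hyc, f_bdr, map_add]
    abel
  · intro i x hx ⟨c, hc⟩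
    have hφx : Y.dV i (φ.f i x) = 0 := f_cycle φ i x hx
    obtain ⟨w, hw⟩ := hψ.2 i (φ.f i x) hφx ⟨c, hc⟩
    exact hφ.2 i x hx ⟨w, hw⟩

lemma qis_cancel_left {X Y Z : RepObj K A} (φ : X ⟶ Y) (ψ : Y ⟶ Z)
    (h : RepHom.IsQis (φ ≫ ψ)) (hφ : RepHom.IsQis φ) : RepHom.IsQis ψ := by
  rw [isQis_iff] at h hφ ⊢
  constructor
  · intro i z hz
    obtain ⟨x, c, hx, hxc⟩ := h.1 i z hz
    exact ⟨φ.f i x, c, f_cycle φ i x hx, hxc⟩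
  · intro i y hy ⟨c, hc⟩
    obtain ⟨x, b, hx, hxb⟩ := hφ.1 i y hy
    have hcomp : (φ ≫ ψ).f i x = bdr Z i (c + ψ.f (i-1) b) := by
      rw [comp_f, hxb, map_add, hc, f_bdr, map_add]
    obtain ⟨w, hw⟩ := h.2 i x hx ⟨_, hcomp⟩
    refine ⟨φ.f (i-1) w - b, ?_⟩
    have : φ.f i x = bdr Y i (φ.f (i-1) w) := by rw [hw, f_bdr]
    rw [map_sub, ← this, hxb]
    abel

lemma qis_cancel_right {X Y Z : RepObj K A} (φ : X ⟶ Y) (ψ : Y ⟶ Z)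
    (h : RepHom.IsQis (φ ≫ ψ)) (hψ : RepHom.IsQis ψ) : RepHom.IsQis φ := by
  rw [isQis_iff] at h hψ ⊢
  constructor
  · intro i y hy
    obtain ⟨x, c, hx, hxc⟩ := h.1 i (ψ.f i y) (f_cycle ψ i y hy)
    have hcyc : Y.dV i (φ.f i x - y) = 0 := by
      rw [map_sub, f_cycle φ i x hx, hy, sub_zero]
    have him : ψ.f i (φ.f i x - y) = bdr Z i c := by
      rw [map_sub, ← comp_f, hxc]; abel
    obtain ⟨w, hw⟩ := hψ.2 i (φ.f i x - y) hcyc ⟨c, him⟩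
    refine ⟨x, w, hx, ?_⟩
    rw [← hw]; abel
  · intro i x hx ⟨c, hc⟩
    have : (φ ≫ ψ).f i x = bdr Z i (ψ.f (i-1) c) := by
      rw [comp_f, hc, f_bdr]
    exact h.2 i x hx ⟨_, this⟩

lemma qis_retract {X Y X' Y' : RepObj K A} (f : X ⟶ Y) (g : X' ⟶ Y')
    (hr : IsRetract f g) (hg : RepHom.IsQis g) : RepHom.IsQis f := by
  obtain ⟨iX, rX, iY, rY, hX, hY, hsq1, hsq2⟩ := hr
  rw [isQis_iff] at hg ⊢
  constructor
  · intro i y hy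
    obtain ⟨x', c', hx', hxc'⟩ := hg.1 i (iY.f i y) (f_cycle iY i y hy)
    refine ⟨rX.f i x', rY.f (i-1) c', f_cycle rX i x' hx', ?_⟩
    have h1 : f.f i (rX.f i x') = rY.f i (g.f i x') := by
      rw [← comp_f, hom_congr hsq2, comp_f]
    rw [h1, hxc', map_add, f_bdr, ← comp_f, hom_congr hY, id_f]
  · intro i x hx ⟨c, hc⟩
    have h1 : g.f i (iX.f i x) = bdr Y' i (iY.f (i-1) c) := by
      rw [← comp_f, hom_congr hsq1, comp_f, hc, f_bdr]
    obtain ⟨w, hw⟩ := hg.2 i (iX.f i x) (f_cycle iX i x hx) ⟨_, h1⟩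
    refine ⟨rX.f (i-1) w, ?_⟩
    have : rX.f i (iX.f i x) = x := by rw [← comp_f, hom_congr hX, id_f]
    rw [← this, hw, f_bdr]

/-! ### surjective quasi-isomorphisms -/

lemma surj_retract {X Y X' Y' : RepObj K A} (f : X ⟶ Y) (g : X' ⟶ Y')
    (hr : IsRetract f g) (hg : RepHom.IsSurj g) : RepHom.IsSurj f := by
  obtain ⟨iX, rX, iY, rY, hX, hY, hsq1, hsq2⟩ := hr
  intro i y
  obtain ⟨x', hx'⟩ := hg i (iY.f i y)
  refine ⟨rX.f i x', ?_⟩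
  have h1 : f.f i (rX.f i x') = rY.f i (g.f i x') := by
    rw [← comp_f, hom_congr hsq2, comp_f]
  rw [h1, hx', ← comp_f, hom_congr hY, id_f]

/-- The kernel of a surjective quasi-isomorphism is acyclic. -/
lemma ker_acyclic {E B : RepObj K A} (p : E ⟶ B) (hs : RepHom.IsSurj p) (hq : RepHom.IsQis p)
    (i : ℤ) (z : E.V i) (hz : E.dV i z = 0) (hpz : p.f i z = 0) :
    ∃ w : E.V (i-1), p.f (i-1) w = 0 ∧ bdr E i w = z := by
  rw [isQis_iff] at hq
  obtain ⟨w₀, hw₀⟩ := hq.2 i z hz ⟨0, by rw [hpz, map_zero]⟩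
  have hb : B.dV (i-1) (p.f (i-1) w₀) = 0 := by
    rw [← bdr_eq_zero_iff, ← f_bdr, ← hw₀, hpz]
  obtain ⟨e, c', he, hec⟩ := hq.1 (i-1) (p.f (i-1) w₀) hb
  obtain ⟨c'', hc''⟩ := hs (i-1-1) c'
  refine ⟨w₀ - e + bdr E (i-1) c'', ?_, ?_⟩
  · rw [map_add, map_sub, hec, f_bdr, hc'']; abel
  · rw [map_add, map_sub, bdr_bdr, ((bdr_eq_zero_iff E i e).2 he), ← hw₀]; abel

/-- Cycles lift along surjective quasi-isomorphisms. -/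
lemma trivfib_cycle_lift {E B : RepObj K A} (p : E ⟶ B) (hs : RepHom.IsSurj p) (hq : RepHom.IsQis p)
    (i : ℤ) (b : B.V i) (hb : B.dV i b = 0) :
    ∃ e : E.V i, E.dV i e = 0 ∧ p.f i e = b := by
  rw [isQis_iff] at hq
  obtain ⟨e₀, c, he₀, heq⟩ := hq.1 i b hb
  obtain ⟨w, hw⟩ := hs (i-1) c
  refine ⟨e₀ - bdr E i w, ?_, ?_⟩
  · rw [map_sub, he₀, bdr_cycle, sub_zero]
  · rw [map_sub, heq, f_bdr, hw]; abel

/-- Key extension step: given a cycle `c` upstairs and an antiderivative `b` of its image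
downstairs, there is `e` upstairs with `d e = c` and `p e = b`. -/
lemma extend_gen {E B : RepObj K A} (p : E ⟶ B) (hs : RepHom.IsSurj p) (hq : RepHom.IsQis p) (i : ℤ)
    (c : E.V (i+1)) (b : B.V i) (hc : E.dV (i+1) c = 0) (hcb : p.f (i+1) c = B.dV i b) :
    ∃ e : E.V i, E.dV i e = c ∧ p.f i e = b := by
  obtain ⟨w₀, hw₀⟩ := hs i b
  have hz : E.dV (i+1) (c - E.dV i w₀) = 0 := by
    rw [map_sub, hc, E.dV_sq, sub_zero]
  have hpz : p.f (i+1) (c - E.dV i w₀) = 0 := by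
    rw [map_sub, hcb, p.comm_d, hw₀, sub_self]
  obtain ⟨w, hpw, hbw⟩ := ker_acyclic p hs hq (i+1) _ hz hpz
  refine ⟨w₀ + gcast (C := fun n => E.V n) (show i+1-1 = i by omega) w, ?_, ?_⟩
  · rw [map_add, dV_gcast]
    have : gcast (C := fun n => E.V n) (show i+1-1+1 = i+1 by omega) (E.dV (i+1-1) w)
        = c - E.dV i w₀ := by rw [← bdr_apply, hbw]
    rw [this]; abel
  · rw [map_add, f_gcast, hw₀, hpw, gcast_zero, add_zero]

end Stmt16

end Aux


section Aux2

variable {K A}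

namespace Stmt16

open Finsupp

section Gadget

variable (M : RepObj K A) (ι : Type)

/-- Terms of the representation obtained from `M` by freely attaching generators `ι`. -/
inductive PreT : Type
  | old : (i : ℤ) → M.V i → PreT
  | gen : ι → PreT
  | rho : (p : ℤ) → A p → PreT → PreT
  | dd : PreT → PreT

variable (gdeg : ι → ℤ)

/-- Degree of a term. -/
def tdeg : PreT M ι → ℤ
  | .old i _ => i
  | .gen g => gdeg g
  | .rho p _ t => p + tdeg t
  | .dd t => tdeg t + 1

/-- The free `K`-module on all terms. -/
abbrev FM := PreT M ι →₀ K

noncomputable def dhat : FM M ι →ₗ[K] FM M ι :=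
  Finsupp.lmapDomain K K PreT.dd

noncomputable def rhat (p : ℤ) (a : A p) : FM M ι →ₗ[K] FM M ι :=
  Finsupp.lmapDomain K K (PreT.rho p a)

lemma dhat_single (t : PreT M ι) : dhat M ι (single t (1:K)) = single t.dd 1 :=
  Finsupp.mapDomain_single

lemma rhat_single (p : ℤ) (a : A p) (t : PreT M ι) :
    rhat M ι p a (single t (1:K)) = single (PreT.rho p a t) 1 :=
  Finsupp.mapDomain_single

variable (dgen : ι → FM M ι)

/-- The relations defining the attached representation. -/
inductive Rel : FM M ι → Prop
  | lin_a (p : ℤ) (a b : A p) (t : PreT M ι) :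
      Rel (single (.rho p (a+b) t) 1 - single (.rho p a t) 1 - single (.rho p b t) 1)
  | smul_a (p : ℤ) (c : K) (a : A p) (t : PreT M ι) :
      Rel (single (.rho p (c • a) t) 1 - c • single (.rho p a t) 1)
  | leib (p : ℤ) (a : A p) (t : PreT M ι) :
      Rel (single (.dd (.rho p a t)) 1
        - single (.rho (p+1) (DGLA.d (K := K) (A := A) p a) t) 1
        - ((-1:K)^p) • single (.rho p a (.dd t)) 1)
  | compat (p q : ℤ) (a : A p) (b : A q) (t : PreT M ι) :
      Rel (single (.rho (p+q) (DGLA.bk (K := K) (A := A) p q a b) t) 1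
        - single (.rho p a (.rho q b t)) 1
        - ((-1:K)^(p*q)) • single (.rho q b (.rho p a t)) 1)
  | ddsq (t : PreT M ι) : Rel (single (.dd (.dd t)) 1)
  | old_add (i : ℤ) (m m' : M.V i) :
      Rel (single (.old i (m+m')) 1 - single (.old i m) 1 - single (.old i m') 1)
  | old_smul (i : ℤ) (c : K) (m : M.V i) :
      Rel (single (.old i (c • m)) 1 - c • single (.old i m) 1)
  | old_d (i : ℤ) (m : M.V i) :
      Rel (single (.dd (.old i m)) 1 - single (.old (i+1) (M.dV i m)) 1)
  | old_rho (p : ℤ) (a : A p) (j : ℤ) (m : M.V j) :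
      Rel (single (.rho p a (.old j m)) 1 - single (.old (p+j) (M.ρ p j a m)) 1)
  | gen_d (g : ι) : Rel (single (.dd (.gen g)) 1 - dgen g)
  | dstep {x : FM M ι} : Rel x → Rel (dhat M ι x)
  | rstep (p : ℤ) (a : A p) {x : FM M ι} : Rel x → Rel (rhat M ι p a x)

noncomputable def RR : Submodule K (FM M ι) := Submodule.span K {x | Rel M ι dgen x}

/-- Underlying (ungraded) module of the attached representation. -/
abbrev EE := FM M ι ⧸ RR M ι dgen

noncomputable def mkE : FM M ι →ₗ[K] EE M ι dgen := (RR M ι dgen).mkQ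

lemma mkE_eq_zero_of_rel {x : FM M ι} (h : Rel M ι dgen x) : mkE M ι dgen x = 0 := by
  rw [mkE, Submodule.mkQ_apply, Submodule.Quotient.mk_eq_zero]
  exact Submodule.subset_span h

lemma mkE_eq_zero_of_mem {x : FM M ι} (h : x ∈ RR M ι dgen) : mkE M ι dgen x = 0 := by
  rw [mkE, Submodule.mkQ_apply, Submodule.Quotient.mk_eq_zero]
  exact h

lemma dhat_mem_RR {x : FM M ι} (h : x ∈ RR M ι dgen) : dhat M ι x ∈ RR M ι dgen := by
  induction h using Submodule.span_induction with
  | mem x hx => exact Submodule.subset_span (Rel.dstep hx)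
  | zero => simp
  | add x y _ _ hx hy => rw [map_add]; exact add_mem hx hy
  | smul c x _ hx => rw [map_smul]; exact Submodule.smul_mem _ _ hx

lemma rhat_mem_RR (p : ℤ) (a : A p) {x : FM M ι} (h : x ∈ RR M ι dgen) :
    rhat M ι p a x ∈ RR M ι dgen := by
  induction h using Submodule.span_induction with
  | mem x hx => exact Submodule.subset_span (Rel.rstep p a hx)
  | zero => simp
  | add x y _ _ hx hy => rw [map_add]; exact add_mem hx hy
  | smul c x _ hx => rw [map_smul]; exact Submodule.smul_mem _ _ hx

noncomputable def dbar : EE M ι dgen →ₗ[K] EE M ι dgen :=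
  Submodule.liftQ _ ((mkE M ι dgen).comp (dhat M ι)) (by
    intro x hx
    simp only [LinearMap.mem_ker, LinearMap.comp_apply]
    rw [mkE, Submodule.mkQ_apply, Submodule.Quotient.mk_eq_zero]
    exact dhat_mem_RR M ι dgen hx)

noncomputable def rbar (p : ℤ) (a : A p) : EE M ι dgen →ₗ[K] EE M ι dgen :=
  Submodule.liftQ _ ((mkE M ι dgen).comp (rhat M ι p a)) (by
    intro x hx
    simp only [LinearMap.mem_ker, LinearMap.comp_apply]
    rw [mkE, Submodule.mkQ_apply, Submodule.Quotient.mk_eq_zero]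
    exact rhat_mem_RR M ι dgen p a hx)

lemma dbar_mk (x : FM M ι) :
    dbar M ι dgen (mkE M ι dgen x) = mkE M ι dgen (dhat M ι x) := rfl

lemma rbar_mk (p : ℤ) (a : A p) (x : FM M ι) :
    rbar M ι dgen p a (mkE M ι dgen x) = mkE M ι dgen (rhat M ι p a x) := rfl

lemma EE_ind {P : EE M ι dgen → Prop} (hz : P 0)
    (hadd : ∀ x y, P x → P y → P (x + y))
    (hsmul : ∀ (c : K) x, P x → P (c • x))
    (hsingle : ∀ t : PreT M ι, P (mkE M ι dgen (single t 1))) : ∀ x, P x := by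
  intro x
  obtain ⟨y, rfl⟩ := Submodule.mkQ_surjective _ x
  show P (mkE M ι dgen y)
  refine Finsupp.induction y (by rw [map_zero]; exact hz) ?_
  intro t b f _ _ hf
  rw [map_add]
  refine hadd _ _ ?_ hf
  have hb : b • single t (1:K) = single t b := by
    rw [Finsupp.smul_single, smul_eq_mul, mul_one]
  rw [← hb, map_smul]
  exact hsmul _ _ (hsingle t)

lemma EE_map_eq {N : Type} [AddCommGroup N] [Module K N]
    {F G : EE M ι dgen →ₗ[K] N}
    (h : ∀ t : PreT M ι, F (mkE M ι dgen (single t 1)) = G (mkE M ι dgen (single t 1))) :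
    F = G := by
  apply LinearMap.ext
  refine EE_ind M ι dgen ?_ ?_ ?_ h
  · rw [map_zero, map_zero]
  · intro x y hx hy; rw [map_add, map_add, hx, hy]
  · intro c x hx; rw [map_smul, map_smul, hx]

/-! #### derived identities in `EE` -/

lemma dbar_dbar (x : EE M ι dgen) : dbar M ι dgen (dbar M ι dgen x) = 0 := by
  have : (dbar M ι dgen).comp (dbar M ι dgen) = (0 : EE M ι dgen →ₗ[K] EE M ι dgen) := by
    refine EE_map_eq M ι dgen ?_
    intro t
    rw [LinearMap.comp_apply, dbar_mk, dhat_single, dbar_mk, dhat_single,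
      LinearMap.zero_apply]
    exact mkE_eq_zero_of_rel M ι dgen (Rel.ddsq t)
  exact DFunLike.congr_fun this x

lemma rbar_add (p : ℤ) (a b : A p) (x : EE M ι dgen) :
    rbar M ι dgen p (a + b) x = rbar M ι dgen p a x + rbar M ι dgen p b x := by
  have : rbar M ι dgen p (a + b) = rbar M ι dgen p a + rbar M ι dgen p b := by
    refine EE_map_eq M ι dgen ?_
    intro t
    rw [LinearMap.add_apply, rbar_mk, rbar_mk, rbar_mk, rhat_single, rhat_single,
      rhat_single]
    have h := mkE_eq_zero_of_rel M ι dgen (Rel.lin_a p a b t)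
    rw [map_sub, map_sub, sub_sub, sub_eq_zero] at h
    exact h
  exact DFunLike.congr_fun this x

lemma rbar_smul (p : ℤ) (c : K) (a : A p) (x : EE M ι dgen) :
    rbar M ι dgen p (c • a) x = c • rbar M ι dgen p a x := by
  have : rbar M ι dgen p (c • a) = c • rbar M ι dgen p a := by
    refine EE_map_eq M ι dgen ?_
    intro t
    rw [LinearMap.smul_apply, rbar_mk, rbar_mk, rhat_single, rhat_single]
    have h := mkE_eq_zero_of_rel M ι dgen (Rel.smul_a p c a t)
    rw [map_sub, map_smul, sub_eq_zero] at h
    exact h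
  exact DFunLike.congr_fun this x

lemma dbar_rbar (p : ℤ) (a : A p) (x : EE M ι dgen) :
    dbar M ι dgen (rbar M ι dgen p a x)
      = rbar M ι dgen (p+1) (DGLA.d (K := K) (A := A) p a) x
        + ((-1:K)^p) • rbar M ι dgen p a (dbar M ι dgen x) := by
  have : (dbar M ι dgen).comp (rbar M ι dgen p a)
      = rbar M ι dgen (p+1) (DGLA.d (K := K) (A := A) p a)
        + ((-1:K)^p) • (rbar M ι dgen p a).comp (dbar M ι dgen) := by
    refine EE_map_eq M ι dgen ?_
    intro t
    rw [LinearMap.comp_apply, LinearMap.add_apply, LinearMap.smul_apply,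
      LinearMap.comp_apply, rbar_mk, rhat_single, dbar_mk, dhat_single, rbar_mk,
      rhat_single, dbar_mk, dhat_single, rbar_mk, rhat_single]
    have h := mkE_eq_zero_of_rel M ι dgen (Rel.leib p a t)
    rw [map_sub, map_sub, map_smul, sub_sub, sub_eq_zero] at h
    exact h
  exact DFunLike.congr_fun this x

lemma rbar_bk (p q : ℤ) (a : A p) (b : A q) (x : EE M ι dgen) :
    rbar M ι dgen (p+q) (DGLA.bk (K := K) (A := A) p q a b) x
      = rbar M ι dgen p a (rbar M ι dgen q b x)
        + ((-1:K)^(p*q)) • rbar M ι dgen q b (rbar M ι dgen p a x) := by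
  have : rbar M ι dgen (p+q) (DGLA.bk (K := K) (A := A) p q a b)
      = (rbar M ι dgen p a).comp (rbar M ι dgen q b)
        + ((-1:K)^(p*q)) • (rbar M ι dgen q b).comp (rbar M ι dgen p a) := by
    refine EE_map_eq M ι dgen ?_
    intro t
    rw [LinearMap.add_apply, LinearMap.smul_apply, LinearMap.comp_apply,
      LinearMap.comp_apply, rbar_mk, rhat_single, rbar_mk, rhat_single, rbar_mk,
      rhat_single, rbar_mk, rhat_single, rbar_mk, rhat_single]
    have h := mkE_eq_zero_of_rel M ι dgen (Rel.compat p q a b t)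
    rw [map_sub, map_sub, map_smul, sub_sub, sub_eq_zero] at h
    exact h
  exact DFunLike.congr_fun this x


/-! #### grading -/

noncomputable def Fdeg (n : ℤ) : Submodule K (FM M ι) :=
  Submodule.span K {x | ∃ t : PreT M ι, tdeg M ι gdeg t = n ∧ x = single t 1}

lemma single_mem_Fdeg {t : PreT M ι} {n : ℤ} (h : tdeg M ι gdeg t = n) :
    single t (1:K) ∈ Fdeg M ι gdeg n :=
  Submodule.subset_span ⟨t, h, rfl⟩

lemma dhat_mem_Fdeg {n : ℤ} {x : FM M ι} (h : x ∈ Fdeg M ι gdeg n) :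
    dhat M ι x ∈ Fdeg M ι gdeg (n+1) := by
  induction h using Submodule.span_induction with
  | mem x hx =>
      obtain ⟨t, ht, rfl⟩ := hx
      rw [dhat_single]
      exact single_mem_Fdeg M ι gdeg (by rw [tdeg, ht])
  | zero => simp
  | add x y _ _ hx hy => rw [map_add]; exact add_mem hx hy
  | smul c x _ hx => rw [map_smul]; exact Submodule.smul_mem _ _ hx

lemma rhat_mem_Fdeg (p : ℤ) (a : A p) {n : ℤ} {x : FM M ι} (h : x ∈ Fdeg M ι gdeg n) :
    rhat M ι p a x ∈ Fdeg M ι gdeg (p+n) := by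
  induction h using Submodule.span_induction with
  | mem x hx =>
      obtain ⟨t, ht, rfl⟩ := hx
      rw [rhat_single]
      exact single_mem_Fdeg M ι gdeg (by rw [tdeg, ht])
  | zero => simp
  | add x y _ _ hx hy => rw [map_add]; exact add_mem hx hy
  | smul c x _ hx => rw [map_smul]; exact Submodule.smul_mem _ _ hx

noncomputable def Ep (n : ℤ) : Submodule K (EE M ι dgen) :=
  (Fdeg M ι gdeg n).map (mkE M ι dgen)

lemma mk_single_mem_Ep {t : PreT M ι} {n : ℤ} (h : tdeg M ι gdeg t = n) :
    mkE M ι dgen (single t 1) ∈ Ep M ι gdeg dgen n :=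
  ⟨single t 1, single_mem_Fdeg M ι gdeg h, rfl⟩

lemma dbar_mem_Ep {n : ℤ} (x : Ep M ι gdeg dgen n) :
    dbar M ι dgen (x : EE M ι dgen) ∈ Ep M ι gdeg dgen (n+1) := by
  obtain ⟨y, hy, hmk⟩ := x.2
  rw [← hmk, dbar_mk]
  exact ⟨dhat M ι y, dhat_mem_Fdeg M ι gdeg hy, rfl⟩

lemma rbar_mem_Ep (p : ℤ) (a : A p) {n : ℤ} (x : Ep M ι gdeg dgen n) :
    rbar M ι dgen p a (x : EE M ι dgen) ∈ Ep M ι gdeg dgen (p+n) := by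
  obtain ⟨y, hy, hmk⟩ := x.2
  rw [← hmk, rbar_mk]
  exact ⟨rhat M ι p a y, rhat_mem_Fdeg M ι gdeg p a hy, rfl⟩

noncomputable def dE (n : ℤ) : Ep M ι gdeg dgen n →ₗ[K] Ep M ι gdeg dgen (n+1) :=
  ((dbar M ι dgen).comp (Ep M ι gdeg dgen n).subtype).codRestrict _
    (fun x => dbar_mem_Ep M ι gdeg dgen x)

noncomputable def rEa (p : ℤ) (a : A p) (n : ℤ) :
    Ep M ι gdeg dgen n →ₗ[K] Ep M ι gdeg dgen (p+n) :=
  ((rbar M ι dgen p a).comp (Ep M ι gdeg dgen n).subtype).codRestrict _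
    (fun x => rbar_mem_Ep M ι gdeg dgen p a x)

@[simp] lemma dE_val {n : ℤ} (x : Ep M ι gdeg dgen n) :
    (dE M ι gdeg dgen n x : EE M ι dgen) = dbar M ι dgen (x : EE M ι dgen) := rfl

@[simp] lemma rEa_val (p : ℤ) (a : A p) {n : ℤ} (x : Ep M ι gdeg dgen n) :
    (rEa M ι gdeg dgen p a n x : EE M ι dgen) = rbar M ι dgen p a (x : EE M ι dgen) := rfl

noncomputable def rE (p n : ℤ) :
    A p →ₗ[K] (Ep M ι gdeg dgen n →ₗ[K] Ep M ι gdeg dgen (p+n)) where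
  toFun a := rEa M ι gdeg dgen p a n
  map_add' a b := by
    apply LinearMap.ext; intro x
    apply Subtype.ext
    simp only [rEa_val, LinearMap.add_apply, Submodule.coe_add]
    exact rbar_add M ι dgen p a b _
  map_smul' c a := by
    apply LinearMap.ext; intro x
    apply Subtype.ext
    simp only [rEa_val, RingHom.id_apply, LinearMap.smul_apply, SetLike.val_smul]
    exact rbar_smul M ι dgen p c a _

lemma val_gcast_Ep {n m : ℤ} (h : n = m) (x : Ep M ι gdeg dgen n) :
    (gcast (C := fun k => Ep M ι gdeg dgen k) h x : EE M ι dgen) = (x : EE M ι dgen) := by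
  subst h; rfl

lemma EV_dsq (i : ℤ) (v : Ep M ι gdeg dgen i) :
    dE M ι gdeg dgen (i+1) (dE M ι gdeg dgen i v) = 0 := by
  apply Subtype.ext
  rw [dE_val, dE_val]
  exact dbar_dbar M ι dgen _

lemma EV_leibniz (p j : ℤ) (a : A p) (v : Ep M ι gdeg dgen j) :
    dE M ι gdeg dgen (p+j) (rE M ι gdeg dgen p j a v)
      = gcast (C := fun k => Ep M ι gdeg dgen k) (show p + 1 + j = p + j + 1 by ring)
          (rE M ι gdeg dgen (p+1) j (DGLA.d (K := K) (A := A) p a) v)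
        + ((-1:K)^p) • gcast (C := fun k => Ep M ι gdeg dgen k)
            (show p + (j + 1) = p + j + 1 by ring)
            (rE M ι gdeg dgen p (j+1) a (dE M ι gdeg dgen j v)) := by
  apply Subtype.ext
  rw [Submodule.coe_add, SetLike.val_smul, val_gcast_Ep, val_gcast_Ep]
  show dbar M ι dgen (rbar M ι dgen p a (v : EE M ι dgen)) = _
  rw [show ((rE M ι gdeg dgen (p+1) j (DGLA.d (K := K) (A := A) p a) v : Ep M ι gdeg dgen ((p+1)+j)) : EE M ι dgen) = rbar M ι dgen (p+1) (DGLA.d (K := K) (A := A) p a) (v : EE M ι dgen) from rfl]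
  rw [show ((rE M ι gdeg dgen p (j+1) a (dE M ι gdeg dgen j v) : Ep M ι gdeg dgen (p+(j+1))) : EE M ι dgen) = rbar M ι dgen p a (dbar M ι dgen (v : EE M ι dgen)) from rfl]
  exact dbar_rbar M ι dgen p a _

lemma EV_compat (p q j : ℤ) (a : A p) (b : A q) (v : Ep M ι gdeg dgen j) :
    rE M ι gdeg dgen (p+q) j (DGLA.bk (K := K) (A := A) p q a b) v
      = gcast (C := fun k => Ep M ι gdeg dgen k) (show p + (q + j) = p + q + j by ring)
          (rE M ι gdeg dgen p (q+j) a (rE M ι gdeg dgen q j b v))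
        + ((-1:K)^(p*q)) • gcast (C := fun k => Ep M ι gdeg dgen k)
            (show q + (p + j) = p + q + j by ring)
            (rE M ι gdeg dgen q (p+j) b (rE M ι gdeg dgen p j a v)) := by
  apply Subtype.ext
  rw [Submodule.coe_add, SetLike.val_smul, val_gcast_Ep, val_gcast_Ep]
  show rbar M ι dgen (p+q) (DGLA.bk (K := K) (A := A) p q a b) (v : EE M ι dgen) = _
  rw [show ((rE M ι gdeg dgen p (q+j) a (rE M ι gdeg dgen q j b v) : Ep M ι gdeg dgen (p+(q+j))) : EE M ι dgen) = rbar M ι dgen p a (rbar M ι dgen q b (v : EE M ι dgen)) from rfl]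
  rw [show ((rE M ι gdeg dgen q (p+j) b (rE M ι gdeg dgen p j a v) : Ep M ι gdeg dgen (q+(p+j))) : EE M ι dgen) = rbar M ι dgen q b (rbar M ι dgen p a (v : EE M ι dgen)) from rfl]
  exact rbar_bk M ι dgen p q a b _

/-- The attached representation. -/
@[reducible] noncomputable def EV : RepObj K A where
  V n := ModuleCat.of K (Ep M ι gdeg dgen n)
  dV := dE M ι gdeg dgen
  ρ := rE M ι gdeg dgen
  dV_sq := fun i v => EV_dsq M ι gdeg dgen i v
  leibniz := fun p j a v => EV_leibniz M ι gdeg dgen p j a v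
  compat := fun p q j a b v => EV_compat M ι gdeg dgen p q j a b v

lemma mkE_eq_of_rel_sub {x y : FM M ι} (h : Rel M ι dgen (x - y)) :
    mkE M ι dgen x = mkE M ι dgen y := by
  have := mkE_eq_zero_of_rel M ι dgen h
  rwa [map_sub, sub_eq_zero] at this

/-- The canonical map from `M` into the attached representation. -/
noncomputable def inclE : M ⟶ EV M ι gdeg dgen where
  f i :=
    { toFun := fun m => ⟨mkE M ι dgen (single (.old i m) 1),
        mk_single_mem_Ep M ι gdeg dgen rfl⟩
      map_add' := by
        intro m m'
        apply Subtype.ext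
        have := mkE_eq_zero_of_rel M ι dgen (Rel.old_add i m m')
        rw [map_sub, map_sub, sub_sub, sub_eq_zero] at this
        exact this
      map_smul' := by
        intro c m
        apply Subtype.ext
        have := mkE_eq_zero_of_rel M ι dgen (Rel.old_smul i c m)
        rw [map_sub, map_smul, sub_eq_zero] at this
        exact this }
  comm_d := by
    intro i m
    apply Subtype.ext
    show mkE M ι dgen (single (.old (i+1) (M.dV i m)) 1)
      = dbar M ι dgen (mkE M ι dgen (single (.old i m) 1))
    rw [dbar_mk, dhat_single]
    exact (mkE_eq_of_rel_sub M ι dgen (Rel.old_d i m)).symm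
  comm_ρ := by
    intro p j a m
    apply Subtype.ext
    show mkE M ι dgen (single (.old (p+j) (M.ρ p j a m)) 1)
      = rbar M ι dgen p a (mkE M ι dgen (single (.old j m) 1))
    rw [rbar_mk, rhat_single]
    exact (mkE_eq_of_rel_sub M ι dgen (Rel.old_rho p a j m)).symm

/-- The generator `g` as an element of the attached representation. -/
noncomputable def genE (g : ι) : Ep M ι gdeg dgen (gdeg g) :=
  ⟨mkE M ι dgen (single (.gen g) 1), mk_single_mem_Ep M ι gdeg dgen rfl⟩

lemma dE_genE (g : ι) :
    (dE M ι gdeg dgen (gdeg g) (genE M ι gdeg dgen g) : EE M ι dgen)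
      = mkE M ι dgen (dgen g) := by
  show dbar M ι dgen (mkE M ι dgen (single (.gen g) 1)) = _
  rw [dbar_mk, dhat_single]
  exact mkE_eq_of_rel_sub M ι dgen (Rel.gen_d g)


/-! #### an induction principle for the graded pieces -/

lemma Ep_ind {P : ∀ n, Ep M ι gdeg dgen n → Prop}
    (hsingle : ∀ t : PreT M ι,
      P (tdeg M ι gdeg t) ⟨mkE M ι dgen (single t 1), mk_single_mem_Ep M ι gdeg dgen rfl⟩)
    (hzero : ∀ n, P n 0)
    (hadd : ∀ n x y, P n x → P n y → P n (x + y))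
    (hsmul : ∀ n (c : K) x, P n x → P n (c • x)) :
    ∀ n x, P n x := by
  have aux : ∀ n (y : FM M ι) (hy : y ∈ Fdeg M ι gdeg n),
      P n ⟨mkE M ι dgen y, Submodule.mem_map_of_mem hy⟩ := by
    intro n y hy
    induction hy using Submodule.span_induction with
    | mem x hx =>
        obtain ⟨t, ht, rfl⟩ := hx
        subst ht
        exact hsingle t
    | zero =>
        rw [show (⟨mkE M ι dgen 0, Submodule.mem_map_of_mem (Submodule.zero_mem _)⟩ :
            Ep M ι gdeg dgen n) = 0 from Subtype.ext (map_zero _)]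
        exact hzero n
    | add x y hx hy hPx hPy =>
        rw [show (⟨mkE M ι dgen (x + y), Submodule.mem_map_of_mem (add_mem hx hy)⟩ :
            Ep M ι gdeg dgen n)
          = ⟨mkE M ι dgen x, Submodule.mem_map_of_mem hx⟩
            + ⟨mkE M ι dgen y, Submodule.mem_map_of_mem hy⟩ from Subtype.ext (map_add _ _ _)]
        exact hadd n _ _ hPx hPy
    | smul c x hx hPx =>
        rw [show (⟨mkE M ι dgen (c • x), Submodule.mem_map_of_mem (Submodule.smul_mem _ c hx)⟩ :
            Ep M ι gdeg dgen n)
          = c • ⟨mkE M ι dgen x, Submodule.mem_map_of_mem hx⟩ from Subtype.ext (map_smul _ _ _)]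
        exact hsmul n c _ hPx
  intro n x
  obtain ⟨y, hy, hmk⟩ := x.2
  have hx : x = ⟨mkE M ι dgen y, Submodule.mem_map_of_mem hy⟩ := Subtype.ext hmk.symm
  rw [hx]
  exact aux n y hy

/-! #### the universal property -/

section Univ

variable (N : RepObj K A)

abbrev NT := DirectSum ℤ (fun i => (N.V i : Type))

noncomputable def lofN (i : ℤ) : (N.V i : Type) →ₗ[K] NT N :=
  DirectSum.lof K ℤ (fun n => (N.V n : Type)) i

noncomputable def dN : NT N →ₗ[K] NT N :=
  DirectSum.toModule K ℤ (NT N) (fun i => (lofN N (i+1)).comp (N.dV i))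

noncomputable def rN (p : ℤ) (a : A p) : NT N →ₗ[K] NT N :=
  DirectSum.toModule K ℤ (NT N) (fun j => (lofN N (p+j)).comp ((N.ρ p j) a))

lemma dN_lof (i : ℤ) (w : N.V i) : dN N (lofN N i w) = lofN N (i+1) (N.dV i w) := by
  rw [dN, lofN, DirectSum.toModule_lof]
  rfl

lemma rN_lof (p : ℤ) (a : A p) (j : ℤ) (w : N.V j) :
    rN N p a (lofN N j w) = lofN N (p+j) (N.ρ p j a w) := by
  rw [rN, lofN, DirectSum.toModule_lof]
  rfl

lemma lof_gcast {i j : ℤ} (h : i = j) (x : N.V i) :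
    lofN N j (gcast (C := fun n => N.V n) h x) = lofN N i x := by
  subst h; rfl

lemma NT_ext {F G : NT N →ₗ[K] NT N}
    (h : ∀ (i : ℤ) (w : N.V i), F (lofN N i w) = G (lofN N i w)) : F = G := by
  refine DirectSum.linearMap_ext _ fun i => ?_
  apply LinearMap.ext; intro w
  exact h i w

lemma nt_dsq (x : NT N) : dN N (dN N x) = 0 := by
  have : (dN N).comp (dN N) = 0 := by
    refine NT_ext N ?_
    intro i w
    rw [LinearMap.comp_apply, dN_lof, dN_lof, N.dV_sq, map_zero, LinearMap.zero_apply]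
  exact DFunLike.congr_fun this x

lemma nt_radd (p : ℤ) (a b : A p) (x : NT N) :
    rN N p (a + b) x = rN N p a x + rN N p b x := by
  have : rN N p (a+b) = rN N p a + rN N p b := by
    refine NT_ext N ?_
    intro j w
    rw [LinearMap.add_apply, rN_lof, rN_lof, rN_lof, map_add, LinearMap.add_apply, map_add]
  exact DFunLike.congr_fun this x

lemma nt_rsmul (p : ℤ) (c : K) (a : A p) (x : NT N) :
    rN N p (c • a) x = c • rN N p a x := by
  have : rN N p (c • a) = c • rN N p a := by
    refine NT_ext N ?_
    intro j w
    rw [LinearMap.smul_apply, rN_lof, rN_lof, map_smul, LinearMap.smul_apply, map_smul]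
  exact DFunLike.congr_fun this x

lemma nt_leib (p : ℤ) (a : A p) (x : NT N) :
    dN N (rN N p a x)
      = rN N (p+1) (DGLA.d (K := K) (A := A) p a) x + ((-1:K)^p) • rN N p a (dN N x) := by
  have : (dN N).comp (rN N p a)
      = rN N (p+1) (DGLA.d (K := K) (A := A) p a) + ((-1:K)^p) • (rN N p a).comp (dN N) := by
    refine NT_ext N ?_
    intro j w
    rw [LinearMap.comp_apply, LinearMap.add_apply, LinearMap.smul_apply, LinearMap.comp_apply,
      rN_lof, dN_lof, N.leibniz, map_add, map_smul, lof_gcast, lof_gcast, dN_lof, rN_lof,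
      rN_lof]
  exact DFunLike.congr_fun this x

lemma nt_compat (p q : ℤ) (a : A p) (b : A q) (x : NT N) :
    rN N (p+q) (DGLA.bk (K := K) (A := A) p q a b) x
      = rN N p a (rN N q b x) + ((-1:K)^(p*q)) • rN N q b (rN N p a x) := by
  have : rN N (p+q) (DGLA.bk (K := K) (A := A) p q a b)
      = (rN N p a).comp (rN N q b) + ((-1:K)^(p*q)) • (rN N q b).comp (rN N p a) := by
    refine NT_ext N ?_
    intro j w
    rw [LinearMap.add_apply, LinearMap.smul_apply, LinearMap.comp_apply, LinearMap.comp_apply,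
      rN_lof, N.compat, map_add, map_smul, lof_gcast, lof_gcast, rN_lof, rN_lof, rN_lof,
      rN_lof]
  exact DFunLike.congr_fun this x

variable (φM : M ⟶ N) (h₀ : ∀ g : ι, (N.V (gdeg g) : Type))

noncomputable def phiT : PreT M ι → NT N
  | .old i m => lofN N i (φM.f i m)
  | .gen g => lofN N (gdeg g) (h₀ g)
  | .rho p a t => rN N p a (phiT t)
  | .dd t => dN N (phiT t)

noncomputable def Phihat : FM M ι →ₗ[K] NT N :=
  (Finsupp.lift (NT N) K (PreT M ι)) (phiT M ι gdeg N φM h₀)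

lemma Phihat_single (t : PreT M ι) (b : K) :
    Phihat M ι gdeg N φM h₀ (single t b) = b • phiT M ι gdeg N φM h₀ t := by
  rw [Phihat, Finsupp.lift_apply, Finsupp.sum_single_index]
  rw [zero_smul]

lemma phiT_gen (g : ι) :
    phiT M ι gdeg N φM h₀ (.gen g) = lofN N (gdeg g) (h₀ g) := rfl

lemma phiT_old (i : ℤ) (m : M.V i) :
    phiT M ι gdeg N φM h₀ (.old i m) = lofN N i (φM.f i m) := rfl

lemma Phihat_dhat (x : FM M ι) :
    Phihat M ι gdeg N φM h₀ (dhat M ι x) = dN N (Phihat M ι gdeg N φM h₀ x) := by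
  have : (Phihat M ι gdeg N φM h₀).comp (dhat M ι)
      = (dN N).comp (Phihat M ι gdeg N φM h₀) := by
    refine Finsupp.lhom_ext fun t b => ?_
    rw [LinearMap.comp_apply, LinearMap.comp_apply, dhat, Finsupp.lmapDomain_apply,
      Finsupp.mapDomain_single, Phihat_single, Phihat_single, map_smul]
    rfl
  exact DFunLike.congr_fun this x

lemma Phihat_rhat (p : ℤ) (a : A p) (x : FM M ι) :
    Phihat M ι gdeg N φM h₀ (rhat M ι p a x) = rN N p a (Phihat M ι gdeg N φM h₀ x) := by
  have : (Phihat M ι gdeg N φM h₀).comp (rhat M ι p a)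
      = (rN N p a).comp (Phihat M ι gdeg N φM h₀) := by
    refine Finsupp.lhom_ext fun t b => ?_
    rw [LinearMap.comp_apply, LinearMap.comp_apply, rhat, Finsupp.lmapDomain_apply,
      Finsupp.mapDomain_single, Phihat_single, Phihat_single, map_smul]
    rfl
  exact DFunLike.congr_fun this x

/-- Compatibility of generator values with prescribed differentials. -/
def GenCompat : Prop :=
  ∀ g : ι, dN N (lofN N (gdeg g) (h₀ g)) = Phihat M ι gdeg N φM h₀ (dgen g)

lemma phi_kills (hgen : GenCompat M ι gdeg dgen N φM h₀) :
    ∀ x : FM M ι, Rel M ι dgen x → Phihat M ι gdeg N φM h₀ x = 0 := by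
  intro x hx
  induction hx with
  | lin_a p a b t =>
      rw [map_sub, map_sub, Phihat_single, Phihat_single, Phihat_single, one_smul, one_smul,
        one_smul]
      show rN N p (a+b) _ - rN N p a _ - rN N p b _ = 0
      rw [nt_radd]; abel
  | smul_a p c a t =>
      rw [map_sub, map_smul, Phihat_single, Phihat_single, one_smul, one_smul]
      show rN N p (c • a) _ - c • rN N p a _ = 0
      rw [nt_rsmul]; abel
  | leib p a t =>
      rw [map_sub, map_sub, map_smul, Phihat_single, Phihat_single, Phihat_single, one_smul,
        one_smul, one_smul]
      show dN N (rN N p a _) - rN N (p+1) _ _ - (-1:K)^p • rN N p a (dN N _) = 0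
      rw [nt_leib]; abel
  | compat p q a b t =>
      rw [map_sub, map_sub, map_smul, Phihat_single, Phihat_single, Phihat_single, one_smul,
        one_smul, one_smul]
      show rN N (p+q) _ _ - rN N p a (rN N q b _) - (-1:K)^(p*q) • rN N q b (rN N p a _) = 0
      rw [nt_compat]; abel
  | ddsq t =>
      rw [Phihat_single, one_smul]
      show dN N (dN N _) = 0
      exact nt_dsq N _
  | old_add i m m' =>
      rw [map_sub, map_sub, Phihat_single, Phihat_single, Phihat_single, one_smul, one_smul,
        one_smul]
      show lofN N i (φM.f i (m + m')) - lofN N i (φM.f i m) - lofN N i (φM.f i m') = 0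
      rw [map_add, map_add]; abel
  | old_smul i c m =>
      rw [map_sub, map_smul, Phihat_single, Phihat_single, one_smul, one_smul]
      show lofN N i (φM.f i (c • m)) - c • lofN N i (φM.f i m) = 0
      rw [map_smul, map_smul]; abel
  | old_d i m =>
      rw [map_sub, Phihat_single, Phihat_single, one_smul, one_smul]
      show dN N (lofN N i (φM.f i m)) - lofN N (i+1) (φM.f (i+1) (M.dV i m)) = 0
      rw [dN_lof, φM.comm_d, sub_self]
  | old_rho p a j m =>
      rw [map_sub, Phihat_single, Phihat_single, one_smul, one_smul]
      show rN N p a (lofN N j (φM.f j m)) - lofN N (p+j) (φM.f (p+j) (M.ρ p j a m)) = 0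
      rw [rN_lof, φM.comm_ρ, sub_self]
  | gen_d g =>
      rw [map_sub, Phihat_single, one_smul]
      show dN N (lofN N (gdeg g) (h₀ g)) - _ = 0
      rw [hgen g, sub_self]
  | dstep h ih =>
      rw [Phihat_dhat, ih, map_zero]
  | rstep p a h ih =>
      rw [Phihat_rhat, ih, map_zero]

noncomputable def Phibar (hgen : GenCompat M ι gdeg dgen N φM h₀) : EE M ι dgen →ₗ[K] NT N :=
  Submodule.liftQ _ (Phihat M ι gdeg N φM h₀) (by
    rw [RR, Submodule.span_le]
    intro x hx
    simp only [SetLike.mem_coe, LinearMap.mem_ker]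
    exact phi_kills M ι gdeg dgen N φM h₀ hgen x hx)

lemma Phibar_mk (hgen : GenCompat M ι gdeg dgen N φM h₀) (x : FM M ι) :
    Phibar M ι gdeg dgen N φM h₀ hgen (mkE M ι dgen x) = Phihat M ι gdeg N φM h₀ x := rfl

lemma phiT_mem (t : PreT M ι) :
    phiT M ι gdeg N φM h₀ t ∈ LinearMap.range (lofN N (tdeg M ι gdeg t)) := by
  induction t with
  | old i m => exact ⟨φM.f i m, rfl⟩
  | gen g => exact ⟨h₀ g, rfl⟩
  | rho p a t ih =>
      obtain ⟨w, hw⟩ := ih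
      refine ⟨N.ρ p (tdeg M ι gdeg t) a w, ?_⟩
      show lofN N (tdeg M ι gdeg (.rho p a t)) (N.ρ p (tdeg M ι gdeg t) a w)
        = rN N p a (phiT M ι gdeg N φM h₀ t)
      rw [← hw, rN_lof]
      rfl
  | dd t ih =>
      obtain ⟨w, hw⟩ := ih
      refine ⟨N.dV (tdeg M ι gdeg t) w, ?_⟩
      show lofN N (tdeg M ι gdeg (.dd t)) (N.dV (tdeg M ι gdeg t) w)
        = dN N (phiT M ι gdeg N φM h₀ t)
      rw [← hw, dN_lof]
      rfl

lemma Phihat_mem {n : ℤ} {x : FM M ι} (h : x ∈ Fdeg M ι gdeg n) :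
    Phihat M ι gdeg N φM h₀ x ∈ LinearMap.range (lofN N n) := by
  induction h using Submodule.span_induction with
  | mem x hx =>
      obtain ⟨t, ht, rfl⟩ := hx
      rw [Phihat_single M ι gdeg N φM h₀ t 1, one_smul]
      exact ht ▸ phiT_mem M ι gdeg N φM h₀ t
  | zero => rw [map_zero]; exact Submodule.zero_mem _
  | add x y _ _ hx hy => rw [map_add]; exact add_mem hx hy
  | smul c x _ hx => rw [map_smul]; exact Submodule.smul_mem _ _ hx

noncomputable def uf (hgen : GenCompat M ι gdeg dgen N φM h₀) (n : ℤ) :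
    Ep M ι gdeg dgen n →ₗ[K] N.V n :=
  (DirectSum.component K ℤ (fun i => (N.V i : Type)) n).comp
    ((Phibar M ι gdeg dgen N φM h₀ hgen).comp (Ep M ι gdeg dgen n).subtype)

lemma uf_spec (hgen : GenCompat M ι gdeg dgen N φM h₀) {n : ℤ} (x : Ep M ι gdeg dgen n) (w : N.V n)
    (hw : Phibar M ι gdeg dgen N φM h₀ hgen (x : EE M ι dgen) = lofN N n w) :
    uf M ι gdeg dgen N φM h₀ hgen n x = w := by
  rw [uf, LinearMap.comp_apply, LinearMap.comp_apply]
  show DirectSum.component K ℤ (fun i => (N.V i : Type)) n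
    (Phibar M ι gdeg dgen N φM h₀ hgen (x : EE M ι dgen)) = w
  rw [hw]
  exact DirectSum.component.lof_self (M := fun i => (N.V i : Type)) K n w

lemma uf_exists (hgen : GenCompat M ι gdeg dgen N φM h₀) {n : ℤ} (x : Ep M ι gdeg dgen n) :
    ∃ w : N.V n, Phibar M ι gdeg dgen N φM h₀ hgen (x : EE M ι dgen) = lofN N n w
      ∧ uf M ι gdeg dgen N φM h₀ hgen n x = w := by
  obtain ⟨y, hy, hmk⟩ := x.2
  have := Phihat_mem M ι gdeg N φM h₀ hy
  obtain ⟨w, hw⟩ := this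
  refine ⟨w, ?_, ?_⟩
  · rw [← hmk, Phibar_mk, hw]
  · exact uf_spec M ι gdeg dgen N φM h₀ hgen x w (by rw [← hmk, Phibar_mk, hw])

/-- The universal map out of the attached representation. -/
noncomputable def univ (hgen : GenCompat M ι gdeg dgen N φM h₀) : EV M ι gdeg dgen ⟶ N where
  f := uf M ι gdeg dgen N φM h₀ hgen
  comm_d := by
    intro i
    show ∀ v : Ep M ι gdeg dgen i,
      uf M ι gdeg dgen N φM h₀ hgen (i+1) (dE M ι gdeg dgen i v)
        = N.dV i (uf M ι gdeg dgen N φM h₀ hgen i v)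
    intro v
    obtain ⟨w, hw, hval⟩ := uf_exists M ι gdeg dgen N φM h₀ hgen v
    have h1 : Phibar M ι gdeg dgen N φM h₀ hgen
        ((dE M ι gdeg dgen i v : Ep M ι gdeg dgen (i+1)) : EE M ι dgen)
        = lofN N (i+1) (N.dV i w) := by
      rw [dE_val]
      obtain ⟨y, hy, hmk⟩ := v.2
      rw [← hmk, dbar_mk, Phibar_mk, Phihat_dhat, ← Phibar_mk M ι gdeg dgen N φM h₀ hgen y,
        hmk, hw, dN_lof]
    rw [uf_spec M ι gdeg dgen N φM h₀ hgen _ _ h1, hval]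
  comm_ρ := by
    intro p j a
    show ∀ v : Ep M ι gdeg dgen j,
      uf M ι gdeg dgen N φM h₀ hgen (p+j) (rE M ι gdeg dgen p j a v)
        = N.ρ p j a (uf M ι gdeg dgen N φM h₀ hgen j v)
    intro v
    obtain ⟨w, hw, hval⟩ := uf_exists M ι gdeg dgen N φM h₀ hgen v
    have h1 : Phibar M ι gdeg dgen N φM h₀ hgen
        ((rE M ι gdeg dgen p j a v : Ep M ι gdeg dgen (p+j)) : EE M ι dgen)
        = lofN N (p+j) (N.ρ p j a w) := by
      rw [show ((rE M ι gdeg dgen p j a v : Ep M ι gdeg dgen (p+j)) : EE M ι dgen)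
          = rbar M ι dgen p a (v : EE M ι dgen) from rfl]
      obtain ⟨y, hy, hmk⟩ := v.2
      rw [← hmk, rbar_mk, Phibar_mk, Phihat_rhat, ← Phibar_mk M ι gdeg dgen N φM h₀ hgen y,
        hmk, hw, rN_lof]
    rw [uf_spec M ι gdeg dgen N φM h₀ hgen _ _ h1, hval]

lemma univ_incl (hgen : GenCompat M ι gdeg dgen N φM h₀) (i : ℤ) (m : M.V i) :
    (univ M ι gdeg dgen N φM h₀ hgen).f i ((inclE M ι gdeg dgen).f i m) = φM.f i m := by
  refine uf_spec M ι gdeg dgen N φM h₀ hgen _ _ ?_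
  show Phibar M ι gdeg dgen N φM h₀ hgen (mkE M ι dgen (single (.old i m) 1)) = _
  rw [Phibar_mk, Phihat_single, one_smul]
  rfl

lemma univ_gen (hgen : GenCompat M ι gdeg dgen N φM h₀) (g : ι) :
    (univ M ι gdeg dgen N φM h₀ hgen).f (gdeg g) (genE M ι gdeg dgen g) = h₀ g := by
  refine uf_spec M ι gdeg dgen N φM h₀ hgen _ _ ?_
  show Phibar M ι gdeg dgen N φM h₀ hgen (mkE M ι dgen (single (.gen g) 1)) = _
  rw [Phibar_mk, Phihat_single, one_smul]
  rfl

end Univ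

/-! #### determination: maps out of `EV` agree once they agree on `M` and the generators -/

lemma EV_hom_ext {N : RepObj K A} (ψ₁ ψ₂ : EV M ι gdeg dgen ⟶ N)
    (hold : ∀ (i : ℤ) (m : M.V i),
      ψ₁.f i ((inclE M ι gdeg dgen).f i m) = ψ₂.f i ((inclE M ι gdeg dgen).f i m))
    (hgen : ∀ g : ι,
      ψ₁.f (gdeg g) (genE M ι gdeg dgen g) = ψ₂.f (gdeg g) (genE M ι gdeg dgen g)) :
    ψ₁ = ψ₂ := by
  have key : ∀ n (x : Ep M ι gdeg dgen n), ψ₁.f n x = ψ₂.f n x := by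
    refine Ep_ind M ι gdeg dgen ?_ ?_ ?_ ?_
    · intro t
      induction t with
      | old i m => exact hold i m
      | gen g => exact hgen g
      | rho p a t ih =>
          have e1 : (⟨mkE M ι dgen (single (.rho p a t) 1),
              mk_single_mem_Ep M ι gdeg dgen rfl⟩ :
                Ep M ι gdeg dgen (tdeg M ι gdeg (.rho p a t)))
              = (EV M ι gdeg dgen).ρ p (tdeg M ι gdeg t) a
                  ⟨mkE M ι dgen (single t 1), mk_single_mem_Ep M ι gdeg dgen rfl⟩ := by
            apply Subtype.ext
            show mkE M ι dgen (single (.rho p a t) 1)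
              = rbar M ι dgen p a (mkE M ι dgen (single t 1))
            rw [rbar_mk, rhat_single]
          rw [e1]
          show ψ₁.f (p + tdeg M ι gdeg t) ((EV M ι gdeg dgen).ρ p (tdeg M ι gdeg t) a
              ⟨mkE M ι dgen (single t 1), mk_single_mem_Ep M ι gdeg dgen rfl⟩)
            = ψ₂.f (p + tdeg M ι gdeg t) ((EV M ι gdeg dgen).ρ p (tdeg M ι gdeg t) a
              ⟨mkE M ι dgen (single t 1), mk_single_mem_Ep M ι gdeg dgen rfl⟩)
          rw [ψ₁.comm_ρ, ψ₂.comm_ρ, ih]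
      | dd t ih =>
          have e1 : (⟨mkE M ι dgen (single (.dd t) 1),
              mk_single_mem_Ep M ι gdeg dgen rfl⟩ :
                Ep M ι gdeg dgen (tdeg M ι gdeg (.dd t)))
              = (EV M ι gdeg dgen).dV (tdeg M ι gdeg t)
                  ⟨mkE M ι dgen (single t 1), mk_single_mem_Ep M ι gdeg dgen rfl⟩ := by
            apply Subtype.ext
            show mkE M ι dgen (single (.dd t) 1)
              = dbar M ι dgen (mkE M ι dgen (single t 1))
            rw [dbar_mk, dhat_single]
          rw [e1]
          show ψ₁.f (tdeg M ι gdeg t + 1) ((EV M ι gdeg dgen).dV (tdeg M ι gdeg t)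
              ⟨mkE M ι dgen (single t 1), mk_single_mem_Ep M ι gdeg dgen rfl⟩)
            = ψ₂.f (tdeg M ι gdeg t + 1) ((EV M ι gdeg dgen).dV (tdeg M ι gdeg t)
              ⟨mkE M ι dgen (single t 1), mk_single_mem_Ep M ι gdeg dgen rfl⟩)
          rw [ψ₁.comm_d, ψ₂.comm_d, ih]
    · intro n; rw [map_zero, map_zero]
    · intro n x y hx hy; rw [map_add, map_add, hx, hy]
    · intro n c x hx; rw [map_smul, map_smul, hx]
  apply RepHom.ext
  funext n
  apply LinearMap.ext
  intro x
  exact key n x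

lemma Ep_congr {n m : ℤ} (h : n = m) {x : EE M ι dgen}
    (hx : x ∈ Ep M ι gdeg dgen n) : x ∈ Ep M ι gdeg dgen m := h ▸ hx

/-- Pass from the `ModuleCat` carrier of `EV` back to the graded submodule. -/
def toEp {n : ℤ} (x : ((EV M ι gdeg dgen).V n : Type)) : Ep M ι gdeg dgen n := x

lemma bdr_val_EV (n : ℤ) (z : Ep M ι gdeg dgen (n-1)) :
    (toEp M ι gdeg dgen (bdr (EV M ι gdeg dgen) n z) : EE M ι dgen)
      = dbar M ι dgen (z : EE M ι dgen) := by
  rw [bdr_apply]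
  exact val_gcast_Ep M ι gdeg dgen (show (n-1)+1 = n by omega)
    (dE M ι gdeg dgen (n-1) z)

lemma rel_homog (hdgen : ∀ g, dgen g ∈ Fdeg M ι gdeg (gdeg g + 1)) {x : FM M ι}
    (h : Rel M ι dgen x) : ∃ n, x ∈ Fdeg M ι gdeg n := by
  induction h with
  | lin_a p a b t =>
      exact ⟨p + tdeg M ι gdeg t, sub_mem (sub_mem (single_mem_Fdeg M ι gdeg rfl)
        (single_mem_Fdeg M ι gdeg rfl)) (single_mem_Fdeg M ι gdeg rfl)⟩
  | smul_a p c a t =>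
      exact ⟨p + tdeg M ι gdeg t, sub_mem (single_mem_Fdeg M ι gdeg rfl)
        (Submodule.smul_mem _ _ (single_mem_Fdeg M ι gdeg rfl))⟩
  | leib p a t =>
      refine ⟨p + tdeg M ι gdeg t + 1, sub_mem (sub_mem
        (single_mem_Fdeg M ι gdeg ?_) (single_mem_Fdeg M ι gdeg ?_))
        (Submodule.smul_mem _ _ (single_mem_Fdeg M ι gdeg ?_))⟩ <;>
      simp only [tdeg] <;> omega
  | compat p q a b t =>
      refine ⟨p + q + tdeg M ι gdeg t, sub_mem (sub_mem
        (single_mem_Fdeg M ι gdeg ?_) (single_mem_Fdeg M ι gdeg ?_))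
        (Submodule.smul_mem _ _ (single_mem_Fdeg M ι gdeg ?_))⟩ <;>
      simp only [tdeg] <;> omega
  | ddsq t => exact ⟨tdeg M ι gdeg t + 1 + 1, single_mem_Fdeg M ι gdeg rfl⟩
  | old_add i m m' =>
      exact ⟨i, sub_mem (sub_mem (single_mem_Fdeg M ι gdeg rfl)
        (single_mem_Fdeg M ι gdeg rfl)) (single_mem_Fdeg M ι gdeg rfl)⟩
  | old_smul i c m =>
      exact ⟨i, sub_mem (single_mem_Fdeg M ι gdeg rfl)
        (Submodule.smul_mem _ _ (single_mem_Fdeg M ι gdeg rfl))⟩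
  | old_d i m => exact ⟨i + 1, sub_mem (single_mem_Fdeg M ι gdeg rfl)
      (single_mem_Fdeg M ι gdeg rfl)⟩
  | old_rho p a j m => exact ⟨p + j, sub_mem (single_mem_Fdeg M ι gdeg rfl)
      (single_mem_Fdeg M ι gdeg rfl)⟩
  | gen_d g => exact ⟨gdeg g + 1, sub_mem (single_mem_Fdeg M ι gdeg rfl) (hdgen g)⟩
  | dstep h ih =>
      obtain ⟨n, hn⟩ := ih
      exact ⟨n + 1, dhat_mem_Fdeg M ι gdeg hn⟩
  | rstep p a h ih =>
      obtain ⟨n, hn⟩ := ih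
      exact ⟨p + n, rhat_mem_Fdeg M ι gdeg p a hn⟩

end Gadget

/-! ### The disk gadget: freely attached contractible generators -/

section Disk

variable (X : RepObj K A) (D : Type) (ddeg : D → ℤ)

def dgd : D ⊕ D → ℤ := fun g => match g with
  | .inl d => ddeg d
  | .inr d => ddeg d + 1

noncomputable def dgn : D ⊕ D → FM X (D ⊕ D) := fun g => match g with
  | .inl d => single (.gen (.inr d)) 1
  | .inr _ => 0

/-- `X` with a family of "disks" freely attached. -/
@[reducible] noncomputable def DiskE : RepObj K A := EV X (D ⊕ D) (dgd D ddeg) (dgn X D)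

noncomputable def inclD : X ⟶ DiskE X D ddeg := inclE X (D ⊕ D) (dgd D ddeg) (dgn X D)

lemma disk_d_gen (d : D) :
    dE X (D ⊕ D) (dgd D ddeg) (dgn X D) (ddeg d)
        (genE X (D ⊕ D) (dgd D ddeg) (dgn X D) (.inl d))
      = genE X (D ⊕ D) (dgd D ddeg) (dgn X D) (.inr d) := by
  apply Subtype.ext
  show dbar X (D ⊕ D) (dgn X D) (mkE X (D ⊕ D) (dgn X D) (single (.gen (.inl d)) 1))
    = mkE X (D ⊕ D) (dgn X D) (single (.gen (.inr d)) 1)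
  rw [dbar_mk, dhat_single]
  exact mkE_eq_of_rel_sub X (D ⊕ D) (dgn X D) (Rel.gen_d (Sum.inl d))

/-- The retraction of the disk gadget onto `X`. -/
noncomputable def rD : DiskE X D ddeg ⟶ X := by
  refine univ X (D ⊕ D) (dgd D ddeg) (dgn X D) X (𝟙 X) (fun _ => 0) ?_
  intro g
  cases g with
  | inl d =>
      show dN X (lofN X (ddeg d) 0)
        = Phihat X (D ⊕ D) (dgd D ddeg) X (𝟙 X) (fun _ => 0) (single (.gen (.inr d)) 1)
      rw [map_zero, map_zero, Phihat_single, one_smul, phiT_gen]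
      show (0 : NT X) = lofN X (ddeg d + 1) 0
      rw [map_zero]
  | inr d =>
      show dN X (lofN X (ddeg d + 1) 0) = Phihat X (D ⊕ D) (dgd D ddeg) X (𝟙 X) (fun _ => 0) 0
      rw [map_zero, map_zero, map_zero]

lemma rD_incl (i : ℤ) (m : X.V i) :
    (rD X D ddeg).f i ((inclD X D ddeg).f i m) = m :=
  univ_incl X (D ⊕ D) (dgd D ddeg) (dgn X D) X (𝟙 X) (fun _ => 0) _ i m

lemma rD_gen (g : D ⊕ D) :
    (rD X D ddeg).f (dgd D ddeg g)
      (genE X (D ⊕ D) (dgd D ddeg) (dgn X D) g) = 0 :=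
  univ_gen X (D ⊕ D) (dgd D ddeg) (dgn X D) X (𝟙 X) (fun _ => 0) _ g

/-- The inclusion of `X` into the disk gadget lifts against arbitrary degreewise
surjections. -/
lemma disk_llp {E B : RepObj K A} (p : E ⟶ B) (hs : RepHom.IsSurj p)
    (u : X ⟶ E) (v : DiskE X D ddeg ⟶ B) (hsq : u ≫ p = inclD X D ddeg ≫ v) :
    ∃ L : DiskE X D ddeg ⟶ E, inclD X D ddeg ≫ L = u ∧ L ≫ p = v := by
  have hch : ∀ d : D, ∃ e : E.V (ddeg d),
      p.f (ddeg d) e = v.f (ddeg d) (genE X (D ⊕ D) (dgd D ddeg) (dgn X D) (.inl d)) :=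
    fun d => hs (ddeg d) _
  choose e he using hch
  set h₀ : ∀ g : D ⊕ D, (E.V (dgd D ddeg g) : Type) := fun g => match g with
    | .inl d => e d
    | .inr d => E.dV (ddeg d) (e d) with hh₀
  have hcompat : GenCompat X (D ⊕ D) (dgd D ddeg) (dgn X D) E u h₀ := by
    intro g
    cases g with
    | inl d =>
        show dN E (lofN E (ddeg d) (e d))
          = Phihat X (D ⊕ D) (dgd D ddeg) E u h₀ (single (.gen (.inr d)) 1)
        rw [dN_lof, Phihat_single, one_smul, phiT_gen]
        rfl
    | inr d =>
        show dN E (lofN E (ddeg d + 1) (E.dV (ddeg d) (e d)))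
          = Phihat X (D ⊕ D) (dgd D ddeg) E u h₀ 0
        rw [dN_lof, E.dV_sq, map_zero, map_zero]
  refine ⟨univ X (D ⊕ D) (dgd D ddeg) (dgn X D) E u h₀ hcompat, ?_, ?_⟩
  · apply RepHom.ext
    funext i
    apply LinearMap.ext
    intro m
    exact univ_incl X (D ⊕ D) (dgd D ddeg) (dgn X D) E u h₀ hcompat i m
  · refine EV_hom_ext X (D ⊕ D) (dgd D ddeg) (dgn X D) _ _ ?_ ?_
    · intro i m
      rw [comp_f, univ_incl]
      have := hom_congr hsq i m
      rw [comp_f] at this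
      rw [this, comp_f]
      rfl
    · intro g
      rw [comp_f, univ_gen]
      cases g with
      | inl d => exact he d
      | inr d =>
          show p.f (ddeg d + 1) (E.dV (ddeg d) (e d)) = _
          erw [p.comm_d, he d, ← v.comm_d]
          show _ = v.f (ddeg d + 1)
            (genE X (D ⊕ D) (dgd D ddeg) (dgn X D) (.inr d))
          rw [← disk_d_gen X D ddeg d]


/-! #### the contracting homotopy of the disk part -/

noncomputable def PiD : DiskE X D ddeg ⟶ DiskE X D ddeg := rD X D ddeg ≫ inclD X D ddeg

noncomputable def PiT (t : PreT X (D ⊕ D)) : EE X (D ⊕ D) (dgn X D) :=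
  (toEp X (D ⊕ D) (dgd D ddeg) (dgn X D)
    ((PiD X D ddeg).f (tdeg X (D ⊕ D) (dgd D ddeg) t)
      ⟨mkE X (D ⊕ D) (dgn X D) (single t 1),
        mk_single_mem_Ep X (D ⊕ D) (dgd D ddeg) (dgn X D) rfl⟩) : EE X (D ⊕ D) (dgn X D))

lemma PiT_old (i : ℤ) (m : X.V i) :
    PiT X D ddeg (.old i m) = mkE X (D ⊕ D) (dgn X D) (single (.old i m) 1) := by
  have h1 : (PiD X D ddeg).f i ((inclD X D ddeg).f i m) = (inclD X D ddeg).f i m := by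
    show ((rD X D ddeg ≫ inclD X D ddeg)).f i ((inclD X D ddeg).f i m) = _
    rw [comp_f, rD_incl]
  show (toEp X (D ⊕ D) (dgd D ddeg) (dgn X D)
    ((PiD X D ddeg).f i ((inclD X D ddeg).f i m)) : EE X (D ⊕ D) (dgn X D)) = _
  rw [h1]
  rfl

lemma PiT_gen (g : D ⊕ D) : PiT X D ddeg (.gen g) = 0 := by
  have h1 : (PiD X D ddeg).f (dgd D ddeg g)
      (genE X (D ⊕ D) (dgd D ddeg) (dgn X D) g) = 0 := by
    show ((rD X D ddeg ≫ inclD X D ddeg)).f _ _ = _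
    rw [comp_f, rD_gen, map_zero]
  show (toEp X (D ⊕ D) (dgd D ddeg) (dgn X D)
    ((PiD X D ddeg).f (dgd D ddeg g) (genE X (D ⊕ D) (dgd D ddeg) (dgn X D) g)) :
      EE X (D ⊕ D) (dgn X D)) = 0
  rw [h1]
  rfl

lemma PiT_rho (p : ℤ) (a : A p) (t : PreT X (D ⊕ D)) :
    PiT X D ddeg (.rho p a t) = rbar X (D ⊕ D) (dgn X D) p a (PiT X D ddeg t) := by
  have e1 : (⟨mkE X (D ⊕ D) (dgn X D) (single (.rho p a t) 1),
      mk_single_mem_Ep X (D ⊕ D) (dgd D ddeg) (dgn X D) rfl⟩ :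
        Ep X (D ⊕ D) (dgd D ddeg) (dgn X D) (tdeg X (D ⊕ D) (dgd D ddeg) (.rho p a t)))
      = (DiskE X D ddeg).ρ p (tdeg X (D ⊕ D) (dgd D ddeg) t) a
          ⟨mkE X (D ⊕ D) (dgn X D) (single t 1),
            mk_single_mem_Ep X (D ⊕ D) (dgd D ddeg) (dgn X D) rfl⟩ := by
    apply Subtype.ext
    show mkE X (D ⊕ D) (dgn X D) (single (.rho p a t) 1)
      = rbar X (D ⊕ D) (dgn X D) p a (mkE X (D ⊕ D) (dgn X D) (single t 1))
    rw [rbar_mk, rhat_single]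
  show (toEp X (D ⊕ D) (dgd D ddeg) (dgn X D)
    ((PiD X D ddeg).f (tdeg X (D ⊕ D) (dgd D ddeg) (.rho p a t)) _) :
      EE X (D ⊕ D) (dgn X D)) = _
  rw [e1]
  have c1 := (PiD X D ddeg).comm_ρ p (tdeg X (D ⊕ D) (dgd D ddeg) t) a
    ⟨mkE X (D ⊕ D) (dgn X D) (single t 1),
      mk_single_mem_Ep X (D ⊕ D) (dgd D ddeg) (dgn X D) rfl⟩
  show (toEp X (D ⊕ D) (dgd D ddeg) (dgn X D)
    ((PiD X D ddeg).f (p + tdeg X (D ⊕ D) (dgd D ddeg) t)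
      ((DiskE X D ddeg).ρ p (tdeg X (D ⊕ D) (dgd D ddeg) t) a _)) :
        EE X (D ⊕ D) (dgn X D)) = _
  rw [c1]
  rfl

lemma PiT_dd (t : PreT X (D ⊕ D)) :
    PiT X D ddeg (.dd t) = dbar X (D ⊕ D) (dgn X D) (PiT X D ddeg t) := by
  have e1 : (⟨mkE X (D ⊕ D) (dgn X D) (single (.dd t) 1),
      mk_single_mem_Ep X (D ⊕ D) (dgd D ddeg) (dgn X D) rfl⟩ :
        Ep X (D ⊕ D) (dgd D ddeg) (dgn X D) (tdeg X (D ⊕ D) (dgd D ddeg) (.dd t)))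
      = (DiskE X D ddeg).dV (tdeg X (D ⊕ D) (dgd D ddeg) t)
          ⟨mkE X (D ⊕ D) (dgn X D) (single t 1),
            mk_single_mem_Ep X (D ⊕ D) (dgd D ddeg) (dgn X D) rfl⟩ := by
    apply Subtype.ext
    show mkE X (D ⊕ D) (dgn X D) (single (.dd t) 1)
      = dbar X (D ⊕ D) (dgn X D) (mkE X (D ⊕ D) (dgn X D) (single t 1))
    rw [dbar_mk, dhat_single]
  show (toEp X (D ⊕ D) (dgd D ddeg) (dgn X D)
    ((PiD X D ddeg).f (tdeg X (D ⊕ D) (dgd D ddeg) (.dd t)) _) :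
      EE X (D ⊕ D) (dgn X D)) = _
  rw [e1]
  have c1 := (PiD X D ddeg).comm_d (tdeg X (D ⊕ D) (dgd D ddeg) t)
    ⟨mkE X (D ⊕ D) (dgn X D) (single t 1),
      mk_single_mem_Ep X (D ⊕ D) (dgd D ddeg) (dgn X D) rfl⟩
  show (toEp X (D ⊕ D) (dgd D ddeg) (dgn X D)
    ((PiD X D ddeg).f (tdeg X (D ⊕ D) (dgd D ddeg) t + 1)
      ((DiskE X D ddeg).dV (tdeg X (D ⊕ D) (dgd D ddeg) t) _)) :
        EE X (D ⊕ D) (dgn X D)) = _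
  rw [c1]
  rfl

noncomputable def hT : PreT X (D ⊕ D) → EE X (D ⊕ D) (dgn X D)
  | .old _ _ => 0
  | .gen (.inl _) => 0
  | .gen (.inr d) => mkE X (D ⊕ D) (dgn X D) (single (.gen (.inl d)) 1)
  | .rho p a t => ((-1:K)^p) • rbar X (D ⊕ D) (dgn X D) p a (hT t)
  | .dd t => mkE X (D ⊕ D) (dgn X D) (single t 1) - PiT X D ddeg t
      - dbar X (D ⊕ D) (dgn X D) (hT t)

lemma hT_old (i : ℤ) (m : X.V i) : hT X D ddeg (.old i m) = 0 := rfl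
lemma hT_genl (d : D) : hT X D ddeg (.gen (.inl d)) = 0 := rfl
lemma hT_genr (d : D) :
    hT X D ddeg (.gen (.inr d)) = mkE X (D ⊕ D) (dgn X D) (single (.gen (.inl d)) 1) := rfl
lemma hT_rho (p : ℤ) (a : A p) (t : PreT X (D ⊕ D)) :
    hT X D ddeg (.rho p a t)
      = ((-1:K)^p) • rbar X (D ⊕ D) (dgn X D) p a (hT X D ddeg t) := rfl
lemma hT_dd (t : PreT X (D ⊕ D)) :
    hT X D ddeg (.dd t)
      = mkE X (D ⊕ D) (dgn X D) (single t 1) - PiT X D ddeg t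
          - dbar X (D ⊕ D) (dgn X D) (hT X D ddeg t) := rfl

noncomputable def hhat : FM X (D ⊕ D) →ₗ[K] EE X (D ⊕ D) (dgn X D) :=
  (Finsupp.lift (EE X (D ⊕ D) (dgn X D)) K (PreT X (D ⊕ D))) (hT X D ddeg)

noncomputable def Pihat : FM X (D ⊕ D) →ₗ[K] EE X (D ⊕ D) (dgn X D) :=
  (Finsupp.lift (EE X (D ⊕ D) (dgn X D)) K (PreT X (D ⊕ D))) (PiT X D ddeg)

lemma hhat_single (t : PreT X (D ⊕ D)) (b : K) :
    hhat X D ddeg (single t b) = b • hT X D ddeg t := by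
  rw [hhat, Finsupp.lift_apply, Finsupp.sum_single_index]
  rw [zero_smul]

lemma Pihat_single (t : PreT X (D ⊕ D)) (b : K) :
    Pihat X D ddeg (single t b) = b • PiT X D ddeg t := by
  rw [Pihat, Finsupp.lift_apply, Finsupp.sum_single_index]
  rw [zero_smul]

lemma hhat_dhat_apply (x : FM X (D ⊕ D)) :
    hhat X D ddeg (dhat X (D ⊕ D) x)
      = mkE X (D ⊕ D) (dgn X D) x - Pihat X D ddeg x
          - dbar X (D ⊕ D) (dgn X D) (hhat X D ddeg x) := by
  have : (hhat X D ddeg).comp (dhat X (D ⊕ D))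
      = mkE X (D ⊕ D) (dgn X D) - Pihat X D ddeg
          - (dbar X (D ⊕ D) (dgn X D)).comp (hhat X D ddeg) := by
    refine Finsupp.lhom_ext fun t b => ?_
    rw [LinearMap.comp_apply, LinearMap.sub_apply, LinearMap.sub_apply,
      LinearMap.comp_apply, dhat, Finsupp.lmapDomain_apply, Finsupp.mapDomain_single,
      hhat_single, hhat_single, Pihat_single, hT_dd, map_smul]
    rw [smul_sub, smul_sub]
    rw [show (single t b : FM X (D ⊕ D)) = b • single t (1:K) from by
      rw [Finsupp.smul_single, smul_eq_mul, mul_one], map_smul]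
  exact DFunLike.congr_fun this x

lemma hhat_rhat_apply (p : ℤ) (a : A p) (x : FM X (D ⊕ D)) :
    hhat X D ddeg (rhat X (D ⊕ D) p a x)
      = ((-1:K)^p) • rbar X (D ⊕ D) (dgn X D) p a (hhat X D ddeg x) := by
  have : (hhat X D ddeg).comp (rhat X (D ⊕ D) p a)
      = ((-1:K)^p) • (rbar X (D ⊕ D) (dgn X D) p a).comp (hhat X D ddeg) := by
    refine Finsupp.lhom_ext fun t b => ?_
    rw [LinearMap.comp_apply, LinearMap.smul_apply, LinearMap.comp_apply, rhat,
      Finsupp.lmapDomain_apply, Finsupp.mapDomain_single, hhat_single, hhat_single,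
      hT_rho, map_smul, smul_comm b]
  exact DFunLike.congr_fun this x

lemma disk_dgen_homog (g : D ⊕ D) :
    dgn X D g ∈ Fdeg X (D ⊕ D) (dgd D ddeg) (dgd D ddeg g + 1) := by
  cases g with
  | inl d =>
      exact single_mem_Fdeg X (D ⊕ D) (dgd D ddeg) (by simp only [tdeg, dgd])
  | inr d => exact Submodule.zero_mem _

lemma Pihat_graded : ∀ (n : ℤ) (y : FM X (D ⊕ D)) (hy : y ∈ Fdeg X (D ⊕ D) (dgd D ddeg) n),
    Pihat X D ddeg y = (toEp X (D ⊕ D) (dgd D ddeg) (dgn X D)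
      ((PiD X D ddeg).f n ⟨mkE X (D ⊕ D) (dgn X D) y, Submodule.mem_map_of_mem hy⟩) :
        EE X (D ⊕ D) (dgn X D)) := by
  intro n y hy
  induction hy using Submodule.span_induction with
  | mem x hx =>
      obtain ⟨t, ht, rfl⟩ := hx
      subst ht
      rw [Pihat_single, one_smul]
      rfl
  | zero =>
      rw [map_zero]
      rw [show (⟨mkE X (D ⊕ D) (dgn X D) 0, Submodule.mem_map_of_mem (Submodule.zero_mem _)⟩ :
          Ep X (D ⊕ D) (dgd D ddeg) (dgn X D) n) = 0 from Subtype.ext (map_zero _), map_zero]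
      rfl
  | add x y hx hy hPx hPy =>
      rw [map_add, hPx, hPy]
      rw [show (⟨mkE X (D ⊕ D) (dgn X D) (x + y), Submodule.mem_map_of_mem (add_mem hx hy)⟩ :
          Ep X (D ⊕ D) (dgd D ddeg) (dgn X D) n)
        = ⟨mkE X (D ⊕ D) (dgn X D) x, Submodule.mem_map_of_mem hx⟩
          + ⟨mkE X (D ⊕ D) (dgn X D) y, Submodule.mem_map_of_mem hy⟩ from
            Subtype.ext (map_add _ _ _), map_add]
      rfl
  | smul c x hx hPx =>
      rw [map_smul, hPx]
      rw [show (⟨mkE X (D ⊕ D) (dgn X D) (c • x),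
          Submodule.mem_map_of_mem (Submodule.smul_mem _ c hx)⟩ :
          Ep X (D ⊕ D) (dgd D ddeg) (dgn X D) n)
        = c • ⟨mkE X (D ⊕ D) (dgn X D) x, Submodule.mem_map_of_mem hx⟩ from
            Subtype.ext (map_smul _ _ _), map_smul]
      rfl

lemma Pihat_rel0 {x : FM X (D ⊕ D)} (h : Rel X (D ⊕ D) (dgn X D) x) :
    Pihat X D ddeg x = 0 := by
  obtain ⟨n, hn⟩ := rel_homog X (D ⊕ D) (dgd D ddeg) (dgn X D) (disk_dgen_homog X D ddeg) h
  rw [Pihat_graded X D ddeg n x hn]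
  rw [show (⟨mkE X (D ⊕ D) (dgn X D) x, Submodule.mem_map_of_mem hn⟩ :
      Ep X (D ⊕ D) (dgd D ddeg) (dgn X D) n) = 0 from Subtype.ext
        (mkE_eq_zero_of_mem X (D ⊕ D) (dgn X D) (Submodule.subset_span h)), map_zero]
  rfl


lemma mk_single_rho (p : ℤ) (a : A p) (t : PreT X (D ⊕ D)) :
    mkE X (D ⊕ D) (dgn X D) (single (.rho p a t) 1)
      = rbar X (D ⊕ D) (dgn X D) p a (mkE X (D ⊕ D) (dgn X D) (single t 1)) := by
  rw [rbar_mk, rhat_single]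

lemma mk_single_dd (t : PreT X (D ⊕ D)) :
    mkE X (D ⊕ D) (dgn X D) (single (.dd t) 1)
      = dbar X (D ⊕ D) (dgn X D) (mkE X (D ⊕ D) (dgn X D) (single t 1)) := by
  rw [dbar_mk, dhat_single]

lemma hhat_kills {x : FM X (D ⊕ D)} (h : Rel X (D ⊕ D) (dgn X D) x) :
    hhat X D ddeg x = 0 := by
  induction h with
  | lin_a p a b t =>
      rw [map_sub, map_sub, hhat_single, hhat_single, hhat_single, one_smul, one_smul,
        one_smul, hT_rho, hT_rho, hT_rho, rbar_add, smul_add]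
      abel
  | smul_a p c a t =>
      rw [map_sub, map_smul, hhat_single, hhat_single, one_smul, one_smul, hT_rho, hT_rho,
        rbar_smul, smul_comm ((-1:K)^p) c]
      abel
  | leib p a t =>
      rw [map_sub, map_sub, map_smul, hhat_single, hhat_single, hhat_single, one_smul,
        one_smul, one_smul, hT_dd, hT_rho, hT_rho, hT_rho, hT_dd, PiT_rho,
        mk_single_rho, map_smul, dbar_rbar, neg_one_zpow_succ, smul_smul,
        neg_one_zpow_mul_self, one_smul, smul_add, smul_smul, neg_one_zpow_mul_self,
        one_smul, map_sub, map_sub, neg_smul]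
      abel
  | compat p q a b t =>
      rw [map_sub, map_sub, map_smul, hhat_single, hhat_single, hhat_single, one_smul,
        one_smul, one_smul, hT_rho, hT_rho, hT_rho, hT_rho, hT_rho, rbar_bk,
        neg_one_zpow_add, map_smul, map_smul, smul_add]
      simp only [smul_smul]
      rw [show ((-1:K)^(p*q)) * (((-1:K)^q) * ((-1:K)^p))
        = ((-1:K)^p) * ((-1:K)^q) * ((-1:K)^(p*q)) from by ring]
      abel
  | ddsq t =>
      rw [hhat_single, one_smul, hT_dd, hT_dd, PiT_dd, mk_single_dd, map_sub, map_sub,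
        dbar_dbar]
      abel
  | old_add i m m' =>
      rw [map_sub, map_sub, hhat_single, hhat_single, hhat_single, one_smul, one_smul,
        one_smul, hT_old, hT_old, hT_old]
      simp
  | old_smul i c m =>
      rw [map_sub, map_smul, hhat_single, hhat_single, one_smul, one_smul, hT_old, hT_old]
      simp
  | old_d i m =>
      rw [map_sub, hhat_single, hhat_single, one_smul, one_smul, hT_dd, hT_old, hT_old,
        PiT_old, map_zero]
      abel
  | old_rho p a j m =>
      rw [map_sub, hhat_single, hhat_single, one_smul, one_smul, hT_rho, hT_old, hT_old,
        map_zero, smul_zero]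
      abel
  | gen_d g =>
      cases g with
      | inl d =>
          rw [map_sub, hhat_single, one_smul, hT_dd, hT_genl,
            show dgn X D (Sum.inl d) = single (.gen (.inr d)) (1:K) from rfl,
            hhat_single, one_smul, hT_genr, PiT_gen]
          simp
      | inr d =>
          rw [map_sub, show dgn X D (Sum.inr d) = (0 : FM X (D ⊕ D)) from rfl, map_zero,
            sub_zero, hhat_single, one_smul, hT_dd, hT_genr, PiT_gen, dbar_mk, dhat_single,
            mkE_eq_of_rel_sub X (D ⊕ D) (dgn X D) (Rel.gen_d (Sum.inl d)),
            show dgn X D (Sum.inl d) = single (.gen (.inr d)) (1:K) from rfl]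
          simp
  | dstep h ih =>
      rw [hhat_dhat_apply, ih, map_zero, sub_zero,
        mkE_eq_zero_of_mem X (D ⊕ D) (dgn X D) (Submodule.subset_span h),
        Pihat_rel0 X D ddeg h, sub_zero]
  | rstep p a h ih =>
      rw [hhat_rhat_apply, ih, map_zero, smul_zero]

noncomputable def hbar : EE X (D ⊕ D) (dgn X D) →ₗ[K] EE X (D ⊕ D) (dgn X D) :=
  Submodule.liftQ _ (hhat X D ddeg) (by
    intro x hx
    simp only [LinearMap.mem_ker]
    induction hx using Submodule.span_induction with
    | mem x hx => exact hhat_kills X D ddeg hx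
    | zero => simp
    | add x y _ _ hx hy => rw [map_add, hx, hy, add_zero]
    | smul c x _ hx => rw [map_smul, hx, smul_zero])

noncomputable def Pibar : EE X (D ⊕ D) (dgn X D) →ₗ[K] EE X (D ⊕ D) (dgn X D) :=
  Submodule.liftQ _ (Pihat X D ddeg) (by
    intro x hx
    simp only [LinearMap.mem_ker]
    induction hx using Submodule.span_induction with
    | mem x hx => exact Pihat_rel0 X D ddeg hx
    | zero => simp
    | add x y _ _ hx hy => rw [map_add, hx, hy, add_zero]
    | smul c x _ hx => rw [map_smul, hx, smul_zero])

lemma hbar_mk (x : FM X (D ⊕ D)) :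
    hbar X D ddeg (mkE X (D ⊕ D) (dgn X D) x) = hhat X D ddeg x := rfl

lemma Pibar_mk (x : FM X (D ⊕ D)) :
    Pibar X D ddeg (mkE X (D ⊕ D) (dgn X D) x) = Pihat X D ddeg x := rfl

/-- The homotopy identity `d ∘ h + h ∘ d = id - Π`. -/
lemma homotopy_identity (z : EE X (D ⊕ D) (dgn X D)) :
    dbar X (D ⊕ D) (dgn X D) (hbar X D ddeg z) + hbar X D ddeg (dbar X (D ⊕ D) (dgn X D) z)
      = z - Pibar X D ddeg z := by
  have : (dbar X (D ⊕ D) (dgn X D)).comp (hbar X D ddeg)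
        + (hbar X D ddeg).comp (dbar X (D ⊕ D) (dgn X D))
      = LinearMap.id - Pibar X D ddeg := by
    refine EE_map_eq X (D ⊕ D) (dgn X D) ?_
    intro t
    rw [LinearMap.add_apply, LinearMap.comp_apply, LinearMap.comp_apply,
      LinearMap.sub_apply, LinearMap.id_apply, hbar_mk, dbar_mk, hbar_mk, dhat_single,
      hhat_single, hhat_single, one_smul, one_smul, hT_dd, Pibar_mk, Pihat_single, one_smul]
    abel
  exact DFunLike.congr_fun this z

lemma hT_mem (t : PreT X (D ⊕ D)) :
    hT X D ddeg t ∈ Ep X (D ⊕ D) (dgd D ddeg) (dgn X D)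
      (tdeg X (D ⊕ D) (dgd D ddeg) t - 1) := by
  induction t with
  | old i m => exact Submodule.zero_mem _
  | gen g =>
      cases g with
      | inl d => exact Submodule.zero_mem _
      | inr d =>
          rw [hT_genr]
          exact mk_single_mem_Ep X (D ⊕ D) (dgd D ddeg) (dgn X D)
            (by simp only [tdeg, dgd]; omega)
  | rho p a t ih =>
      rw [hT_rho]
      refine Submodule.smul_mem _ _ ?_
      refine Ep_congr X (D ⊕ D) (dgd D ddeg) (dgn X D)
        (show p + (tdeg X (D ⊕ D) (dgd D ddeg) t - 1)
          = tdeg X (D ⊕ D) (dgd D ddeg) (.rho p a t) - 1 by simp only [tdeg]; omega) ?_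
      exact rbar_mem_Ep X (D ⊕ D) (dgd D ddeg) (dgn X D) p a ⟨hT X D ddeg t, ih⟩
  | dd t ih =>
      rw [hT_dd]
      refine sub_mem (sub_mem ?_ ?_) ?_
      · refine Ep_congr X (D ⊕ D) (dgd D ddeg) (dgn X D)
          (show tdeg X (D ⊕ D) (dgd D ddeg) t
            = tdeg X (D ⊕ D) (dgd D ddeg) (.dd t) - 1 by simp only [tdeg]; omega) ?_
        exact mk_single_mem_Ep X (D ⊕ D) (dgd D ddeg) (dgn X D) rfl
      · refine Ep_congr X (D ⊕ D) (dgd D ddeg) (dgn X D)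
          (show tdeg X (D ⊕ D) (dgd D ddeg) t
            = tdeg X (D ⊕ D) (dgd D ddeg) (.dd t) - 1 by simp only [tdeg]; omega) ?_
        exact (toEp X (D ⊕ D) (dgd D ddeg) (dgn X D)
          ((PiD X D ddeg).f (tdeg X (D ⊕ D) (dgd D ddeg) t) _)).2
      · refine Ep_congr X (D ⊕ D) (dgd D ddeg) (dgn X D)
          (show (tdeg X (D ⊕ D) (dgd D ddeg) t - 1) + 1
            = tdeg X (D ⊕ D) (dgd D ddeg) (.dd t) - 1 by simp only [tdeg]; omega) ?_
        exact dbar_mem_Ep X (D ⊕ D) (dgd D ddeg) (dgn X D) ⟨hT X D ddeg t, ih⟩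

lemma hbar_mem : ∀ (n : ℤ) (v : Ep X (D ⊕ D) (dgd D ddeg) (dgn X D) n),
    hbar X D ddeg (v : EE X (D ⊕ D) (dgn X D))
      ∈ Ep X (D ⊕ D) (dgd D ddeg) (dgn X D) (n - 1) := by
  refine Ep_ind X (D ⊕ D) (dgd D ddeg) (dgn X D) ?_ ?_ ?_ ?_
  · intro t
    show hbar X D ddeg (mkE X (D ⊕ D) (dgn X D) (single t 1)) ∈ _
    rw [hbar_mk, hhat_single, one_smul]
    exact hT_mem X D ddeg t
  · intro n
    rw [show ((0 : Ep X (D ⊕ D) (dgd D ddeg) (dgn X D) n) : EE X (D ⊕ D) (dgn X D))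
      = 0 from rfl, map_zero]
    exact Submodule.zero_mem _
  · intro n x y hx hy
    rw [Submodule.coe_add, map_add]
    exact add_mem hx hy
  · intro n c x hx
    rw [SetLike.val_smul, map_smul]
    exact Submodule.smul_mem _ _ hx

lemma Pibar_graded_val : ∀ (n : ℤ) (v : Ep X (D ⊕ D) (dgd D ddeg) (dgn X D) n),
    Pibar X D ddeg (v : EE X (D ⊕ D) (dgn X D))
      = (toEp X (D ⊕ D) (dgd D ddeg) (dgn X D) ((PiD X D ddeg).f n v) :
          EE X (D ⊕ D) (dgn X D)) := by
  intro n v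
  obtain ⟨y, hy, hmk⟩ := v.2
  have hv : v = ⟨mkE X (D ⊕ D) (dgn X D) y, Submodule.mem_map_of_mem hy⟩ :=
    Subtype.ext hmk.symm
  rw [hv]
  show Pibar X D ddeg (mkE X (D ⊕ D) (dgn X D) y) = _
  rw [Pibar_mk, Pihat_graded X D ddeg n y hy]

/-- The inclusion of `X` into the disk gadget is a quasi-isomorphism. -/
lemma inclD_qis : RepHom.IsQis (inclD X D ddeg) := by
  rw [isQis_iff]
  constructor
  · intro n
    show ∀ y : Ep X (D ⊕ D) (dgd D ddeg) (dgn X D) n, _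
    intro y hy
    have hyval : dbar X (D ⊕ D) (dgn X D) (y : EE X (D ⊕ D) (dgn X D)) = 0 := by
      have := congrArg Subtype.val hy
      exact this
    refine ⟨(rD X D ddeg).f n y, ⟨-(hbar X D ddeg (y : EE X (D ⊕ D) (dgn X D))),
      neg_mem (hbar_mem X D ddeg n y)⟩, f_cycle (rD X D ddeg) n y hy, ?_⟩
    apply Subtype.ext
    show ((inclD X D ddeg).f n ((rD X D ddeg).f n y) :
        Ep X (D ⊕ D) (dgd D ddeg) (dgn X D) n).val
      = Subtype.val y + (toEp X (D ⊕ D) (dgd D ddeg) (dgn X D)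
          (bdr (EV X (D ⊕ D) (dgd D ddeg) (dgn X D)) n
            ⟨-(hbar X D ddeg (y : EE X (D ⊕ D) (dgn X D))),
              neg_mem (hbar_mem X D ddeg n y)⟩) : EE X (D ⊕ D) (dgn X D))
    have hb := bdr_val_EV X (D ⊕ D) (dgd D ddeg) (dgn X D) n
      ⟨-(hbar X D ddeg (y : EE X (D ⊕ D) (dgn X D))), neg_mem (hbar_mem X D ddeg n y)⟩
    rw [hb]
    rw [show ((⟨-(hbar X D ddeg (y : EE X (D ⊕ D) (dgn X D))),
        neg_mem (hbar_mem X D ddeg n y)⟩ :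
          Ep X (D ⊕ D) (dgd D ddeg) (dgn X D) (n-1)) : EE X (D ⊕ D) (dgn X D))
      = -(hbar X D ddeg (y : EE X (D ⊕ D) (dgn X D))) from rfl]
    rw [map_neg]
    have hmain := homotopy_identity X D ddeg (y : EE X (D ⊕ D) (dgn X D))
    rw [hyval, map_zero, add_zero] at hmain
    have hpi := Pibar_graded_val X D ddeg n y
    have hleft : ((inclD X D ddeg).f n ((rD X D ddeg).f n y) :
        Ep X (D ⊕ D) (dgd D ddeg) (dgn X D) n).val
        = (toEp X (D ⊕ D) (dgd D ddeg) (dgn X D) ((PiD X D ddeg).f n y) :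
            EE X (D ⊕ D) (dgn X D)) := rfl
    rw [hleft, ← hpi, hmain]
    abel
  · intro n
    show ∀ x : X.V n, X.dV n x = 0 →
      (∃ z, (inclD X D ddeg).f n x = bdr (DiskE X D ddeg) n z) → _
    intro x hx ⟨z, hz⟩
    refine ⟨(rD X D ddeg).f (n-1) z, ?_⟩
    have := congrArg ((rD X D ddeg).f n) hz
    rw [rD_incl, f_bdr] at this
    exact this

end Disk



/-! ### The cell gadget: attaching cells along prescribed cycles -/

section Cell

variable (Z : RepObj K A) (I : Type) (cdeg : I → ℤ) (cval : ∀ c : I, (Z.V (cdeg c + 1) : Type))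

noncomputable def cgn : I → FM Z I := fun c => single (.old (cdeg c + 1) (cval c)) 1

/-- `Z` with cells attached along the cycles `cval`. -/
@[reducible] noncomputable def CellE : RepObj K A := EV Z I cdeg (cgn Z I cdeg cval)

noncomputable def inclC : Z ⟶ CellE Z I cdeg cval := inclE Z I cdeg (cgn Z I cdeg cval)

lemma cell_d_gen (c : I) :
    dE Z I cdeg (cgn Z I cdeg cval) (cdeg c)
        (genE Z I cdeg (cgn Z I cdeg cval) c)
      = (inclC Z I cdeg cval).f (cdeg c + 1) (cval c) := by
  apply Subtype.ext
  show dbar Z I (cgn Z I cdeg cval) (mkE Z I (cgn Z I cdeg cval) (single (.gen c) 1))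
    = mkE Z I (cgn Z I cdeg cval) (single (.old (cdeg c + 1) (cval c)) 1)
  rw [dbar_mk, dhat_single]
  exact mkE_eq_of_rel_sub Z I (cgn Z I cdeg cval) (Rel.gen_d c)

/-- Extending a map along attached cells. -/
noncomputable def cellUniv (N : RepObj K A) (φN : Z ⟶ N) (w : ∀ c : I, (N.V (cdeg c) : Type))
    (hw : ∀ c : I, N.dV (cdeg c) (w c) = φN.f (cdeg c + 1) (cval c)) :
    CellE Z I cdeg cval ⟶ N := by
  refine univ Z I cdeg (cgn Z I cdeg cval) N φN w ?_
  intro c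
  show dN N (lofN N (cdeg c) (w c))
    = Phihat Z I cdeg N φN w (single (.old (cdeg c + 1) (cval c)) 1)
  rw [dN_lof, hw c, Phihat_single, one_smul, phiT_old]

lemma cellUniv_incl (N : RepObj K A) (φN : Z ⟶ N) (w : ∀ c : I, (N.V (cdeg c) : Type))
    (hw : ∀ c, N.dV (cdeg c) (w c) = φN.f (cdeg c + 1) (cval c)) :
    inclC Z I cdeg cval ≫ cellUniv Z I cdeg cval N φN w hw = φN := by
  apply RepHom.ext
  funext i
  apply LinearMap.ext
  intro m
  exact univ_incl Z I cdeg (cgn Z I cdeg cval) N φN w _ i m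

lemma cellUniv_gen (N : RepObj K A) (φN : Z ⟶ N) (w : ∀ c : I, (N.V (cdeg c) : Type))
    (hw : ∀ c, N.dV (cdeg c) (w c) = φN.f (cdeg c + 1) (cval c)) (c : I) :
    (cellUniv Z I cdeg cval N φN w hw).f (cdeg c)
      (genE Z I cdeg (cgn Z I cdeg cval) c) = w c :=
  univ_gen Z I cdeg (cgn Z I cdeg cval) N φN w _ c

/-- Lifting along attached cells against a surjective quasi-isomorphism. -/
lemma cell_extA {E B : RepObj K A} (p : E ⟶ B) (hs : RepHom.IsSurj p)
    (hq : RepHom.IsQis p) (hcyc : ∀ c : I, Z.dV (cdeg c + 1) (cval c) = 0)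
    (u : Z ⟶ E) (v : CellE Z I cdeg cval ⟶ B) (hsq : u ≫ p = inclC Z I cdeg cval ≫ v) :
    ∃ L : CellE Z I cdeg cval ⟶ E, inclC Z I cdeg cval ≫ L = u ∧ L ≫ p = v := by
  have hch : ∀ c : I, ∃ e : E.V (cdeg c),
      E.dV (cdeg c) e = u.f (cdeg c + 1) (cval c)
        ∧ p.f (cdeg c) e = v.f (cdeg c) (genE Z I cdeg (cgn Z I cdeg cval) c) := by
    intro c
    refine extend_gen p hs hq (cdeg c) _ _ (f_cycle u _ _ (hcyc c)) ?_
    have h1 : p.f (cdeg c + 1) (u.f (cdeg c + 1) (cval c))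
        = v.f (cdeg c + 1) ((inclC Z I cdeg cval).f (cdeg c + 1) (cval c)) := by
      have := hom_congr hsq (cdeg c + 1) (cval c)
      rw [comp_f] at this
      rw [this, comp_f]
    rw [h1, ← cell_d_gen, ← v.comm_d]
  choose e he1 he2 using hch
  have hcompat : GenCompat Z I cdeg (cgn Z I cdeg cval) E u e := by
    intro c
    show dN E (lofN E (cdeg c) (e c))
      = Phihat Z I cdeg E u e (single (.old (cdeg c + 1) (cval c)) 1)
    rw [dN_lof, he1 c, Phihat_single, one_smul, phiT_old]
  refine ⟨univ Z I cdeg (cgn Z I cdeg cval) E u e hcompat, ?_, ?_⟩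
  · apply RepHom.ext
    funext i
    apply LinearMap.ext
    intro m
    exact univ_incl Z I cdeg (cgn Z I cdeg cval) E u e hcompat i m
  · refine EV_hom_ext Z I cdeg (cgn Z I cdeg cval) _ _ ?_ ?_
    · intro i m
      rw [comp_f, univ_incl]
      have := hom_congr hsq i m
      rw [comp_f] at this
      rw [this, comp_f]
      rfl
    · intro c
      rw [comp_f, univ_gen]
      exact he2 c

end Cell

/-! ### The factorization triv-cofibration / fibration -/

/-- The strong left lifting property against all degreewise surjections. -/
def SLLP {P Q : RepObj K A} (i : P ⟶ Q) : Prop :=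
  ∀ ⦃E B : RepObj K A⦄ (p : E ⟶ B), RepHom.IsSurj p →
    ∀ (u : P ⟶ E) (v : Q ⟶ B), u ≫ p = i ≫ v → ∃ h : Q ⟶ E, i ≫ h = u ∧ h ≫ p = v

/-- Factorization of an arbitrary map as a trivial cofibration followed by a fibration. -/
lemma factor_tcf {X Y : RepObj K A} (f : X ⟶ Y) :
    ∃ (Z : RepObj K A) (i : X ⟶ Z) (q : Z ⟶ Y),
      SLLP i ∧ RepHom.IsQis i ∧ RepHom.IsSurj q ∧ i ≫ q = f := by
  classical
  set D : Type := Σ n : ℤ, (Y.V n : Type) with hD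
  set ddeg : D → ℤ := Sigma.fst with hdd
  set h₀ : ∀ g : D ⊕ D, (Y.V (dgd D ddeg g) : Type) := fun g => match g with
    | .inl d => d.2
    | .inr d => Y.dV d.1 d.2 with hh₀
  have hcompat : GenCompat X (D ⊕ D) (dgd D ddeg) (dgn X D) Y f h₀ := by
    intro g
    cases g with
    | inl d =>
        show dN Y (lofN Y d.1 d.2)
          = Phihat X (D ⊕ D) (dgd D ddeg) Y f h₀ (single (.gen (.inr d)) 1)
        rw [dN_lof, Phihat_single, one_smul, phiT_gen]
        rfl
    | inr d =>
        show dN Y (lofN Y (d.1 + 1) (Y.dV d.1 d.2))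
          = Phihat X (D ⊕ D) (dgd D ddeg) Y f h₀ 0
        rw [dN_lof, Y.dV_sq, map_zero, map_zero]
  refine ⟨DiskE X D ddeg, inclD X D ddeg,
    univ X (D ⊕ D) (dgd D ddeg) (dgn X D) Y f h₀ hcompat, ?_, inclD_qis X D ddeg, ?_, ?_⟩
  · intro E B p hs u v hsq
    exact disk_llp X D ddeg p hs u v hsq
  · intro n y
    refine ⟨genE X (D ⊕ D) (dgd D ddeg) (dgn X D) (.inl ⟨n, y⟩), ?_⟩
    exact univ_gen X (D ⊕ D) (dgd D ddeg) (dgn X D) Y f h₀ hcompat (.inl ⟨n, y⟩)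
  · apply RepHom.ext
    funext i
    apply LinearMap.ext
    intro m
    exact univ_incl X (D ⊕ D) (dgd D ddeg) (dgn X D) Y f h₀ hcompat i m

/-! ### The tower of cell attachments and its colimit -/

section Tower

variable (X Y : RepObj K A) (f : X ⟶ Y)

structure TS where
  Z : RepObj K A
  q : Z ⟶ Y

variable {Y}

/-- Index of cells to attach: relative cycles to kill, and spheres to cover cycles. -/
def stepI (T : TS Y) : Type :=
  (Σ n : ℤ, {z : (T.Z.V n : Type) //
      T.Z.dV n z = 0 ∧ ∃ y' : (Y.V (n-1) : Type), T.q.f n z = bdr Y n y'})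
  ⊕ (Σ n : ℤ, {y : (Y.V n : Type) // Y.dV n y = 0})

def stepdeg (T : TS Y) : stepI T → ℤ := fun c => match c with
  | .inl c => c.1 - 1
  | .inr c => c.1

noncomputable def stepval (T : TS Y) :
    ∀ c : stepI T, (T.Z.V (stepdeg T c + 1) : Type) := fun c => match c with
  | .inl c => gcast (C := fun k => T.Z.V k) (show c.1 = c.1 - 1 + 1 by omega) c.2.1
  | .inr _ => 0

lemma stepval_cycle (T : TS Y) (c : stepI T) :
    T.Z.dV (stepdeg T c + 1) (stepval T c) = 0 := by
  cases c with
  | inl c =>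
      show T.Z.dV (c.1 - 1 + 1)
        (gcast (C := fun k => T.Z.V k) (show c.1 = c.1 - 1 + 1 by omega) c.2.1) = 0
      rw [dV_gcast, c.2.2.1, gcast_zero]
  | inr c =>
      show T.Z.dV (c.1 + 1) 0 = 0
      rw [map_zero]

noncomputable def stepw (T : TS Y) : ∀ c : stepI T, (Y.V (stepdeg T c) : Type) :=
  fun c => match c with
  | .inl c => Classical.choose c.2.2.2
  | .inr c => c.2.1

lemma stepw_spec (T : TS Y) (c : stepI T) :
    Y.dV (stepdeg T c) (stepw T c) = T.q.f (stepdeg T c + 1) (stepval T c) := by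
  cases c with
  | inl c =>
      show Y.dV (c.1 - 1) (Classical.choose c.2.2.2)
        = T.q.f (c.1 - 1 + 1)
            (gcast (C := fun k => T.Z.V k) (show c.1 = c.1 - 1 + 1 by omega) c.2.1)
      rw [f_gcast]
      conv_rhs => rw [Classical.choose_spec c.2.2.2]
      rw [bdr_apply, gcast_trans]
      rfl
  | inr c =>
      show Y.dV c.1 c.2.1 = T.q.f (c.1 + 1) 0
      rw [map_zero]
      exact c.2.2

/-- One step of the tower: attach the cells. -/
noncomputable def stepTS (T : TS Y) : TS Y where
  Z := CellE T.Z (stepI T) (stepdeg T) (stepval T)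
  q := cellUniv T.Z (stepI T) (stepdeg T) (stepval T) Y T.q (stepw T) (stepw_spec T)

noncomputable def stepIncl (T : TS Y) : T.Z ⟶ (stepTS T).Z :=
  inclC T.Z (stepI T) (stepdeg T) (stepval T)

lemma stepIncl_q (T : TS Y) : stepIncl T ≫ (stepTS T).q = T.q :=
  cellUniv_incl T.Z (stepI T) (stepdeg T) (stepval T) Y T.q (stepw T) (stepw_spec T)

variable (Y)

noncomputable def T0 : TS Y where
  Z := (factor_tcf f).choose
  q := (factor_tcf f).choose_spec.choose_spec.choose

noncomputable def i0 : X ⟶ (T0 X Y f).Z := (factor_tcf f).choose_spec.choose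

lemma T0_spec : SLLP (i0 X Y f) ∧ RepHom.IsQis (i0 X Y f)
    ∧ RepHom.IsSurj (T0 X Y f).q ∧ i0 X Y f ≫ (T0 X Y f).q = f :=
  (factor_tcf f).choose_spec.choose_spec.choose_spec

noncomputable def towerT : ℕ → TS Y
  | 0 => T0 X Y f
  | (t+1) => stepTS (towerT t)

noncomputable def towerMap (t : ℕ) : (towerT X Y f t).Z ⟶ (towerT X Y f (t+1)).Z :=
  stepIncl (towerT X Y f t)

lemma towerMap_q (t : ℕ) :
    towerMap X Y f t ≫ (towerT X Y f (t+1)).q = (towerT X Y f t).q :=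
  stepIncl_q (towerT X Y f t)

abbrev Ft (t : ℕ) (n : ℤ) : Type := ((towerT X Y f t).Z.V n : Type)

noncomputable def tmaps (n : ℤ) (t t' : ℕ) (h : t ≤ t') :
    Ft X Y f t n →ₗ[K] Ft X Y f t' n :=
  Nat.leRecOn h (fun {k} g => ((towerMap X Y f k).f n).comp g) LinearMap.id

lemma tmaps_self (n : ℤ) (t : ℕ) (x : Ft X Y f t n) :
    tmaps X Y f n t t le_rfl x = x := by
  rw [tmaps, Nat.leRecOn_self]
  rfl

lemma tmaps_succ (n : ℤ) (t t' : ℕ) (h : t ≤ t') (h2 : t ≤ t' + 1) (x : Ft X Y f t n) :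
    tmaps X Y f n t (t'+1) h2 x = (towerMap X Y f t').f n (tmaps X Y f n t t' h x) := by
  rw [tmaps, Nat.leRecOn_succ h]
  rfl

lemma tmaps_comp (n : ℤ) (i j k : ℕ) (hij : i ≤ j) (hjk : j ≤ k) (x : Ft X Y f i n) :
    tmaps X Y f n j k hjk (tmaps X Y f n i j hij x)
      = tmaps X Y f n i k (hij.trans hjk) x := by
  induction k, hjk using Nat.le_induction with
  | base => rw [tmaps_self]
  | succ k hk ih =>
      rw [tmaps_succ X Y f n j k hk, tmaps_succ X Y f n i k (hij.trans hk), ih]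

instance towerDS (n : ℤ) : DirectedSystem (fun t => Ft X Y f t n)
    (fun t t' h => tmaps X Y f n t t' h) := by
  constructor
  · intro t x
    exact tmaps_self X Y f n t x
  · intro k j i hij hjk x
    exact tmaps_comp X Y f n i j k hij hjk x

lemma tmaps_dV (n : ℤ) (t t' : ℕ) (h : t ≤ t') (x : Ft X Y f t n) :
    (towerT X Y f t').Z.dV n (tmaps X Y f n t t' h x)
      = tmaps X Y f (n+1) t t' h ((towerT X Y f t).Z.dV n x) := by
  induction t', h using Nat.le_induction with
  | base => rw [tmaps_self, tmaps_self]
  | succ t' h ih =>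
      rw [tmaps_succ X Y f n t t' h, tmaps_succ X Y f (n+1) t t' h,
        ← (towerMap X Y f t').comm_d, ih]

lemma tmaps_rho (p n : ℤ) (a : A p) (t t' : ℕ) (h : t ≤ t') (x : Ft X Y f t n) :
    (towerT X Y f t').Z.ρ p n a (tmaps X Y f n t t' h x)
      = tmaps X Y f (p+n) t t' h ((towerT X Y f t).Z.ρ p n a x) := by
  induction t', h using Nat.le_induction with
  | base => rw [tmaps_self, tmaps_self]
  | succ t' h ih =>
      rw [tmaps_succ X Y f n t t' h, tmaps_succ X Y f (p+n) t t' h,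
        ← (towerMap X Y f t').comm_ρ, ih]

lemma tmaps_q (n : ℤ) (t t' : ℕ) (h : t ≤ t') (x : Ft X Y f t n) :
    (towerT X Y f t').q.f n (tmaps X Y f n t t' h x) = (towerT X Y f t).q.f n x := by
  induction t', h using Nat.le_induction with
  | base => rw [tmaps_self]
  | succ t' h ih =>
      rw [tmaps_succ X Y f n t t' h, ← ih]
      have := hom_congr (towerMap_q X Y f t') n (tmaps X Y f n t t' h x)
      rw [comp_f] at this
      rw [this]

/-- The graded pieces of the colimit. -/
noncomputable def Lt (n : ℤ) : Type :=
  Module.DirectLimit (fun t => Ft X Y f t n) (fun t t' h => tmaps X Y f n t t' h)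

noncomputable instance (n : ℤ) : AddCommGroup (Lt X Y f n) := by
  unfold Lt; infer_instance

noncomputable instance (n : ℤ) : Module K (Lt X Y f n) := by
  unfold Lt; infer_instance

noncomputable def ofL (t : ℕ) (n : ℤ) : Ft X Y f t n →ₗ[K] Lt X Y f n :=
  Module.DirectLimit.of K ℕ (fun t => Ft X Y f t n) (fun t t' h => tmaps X Y f n t t' h) t

lemma ofL_tmaps (t t' : ℕ) (h : t ≤ t') (n : ℤ) (x : Ft X Y f t n) :
    ofL X Y f t' n (tmaps X Y f n t t' h x) = ofL X Y f t n x :=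
  Module.DirectLimit.of_f

lemma Lt_exists (n : ℤ) (z : Lt X Y f n) : ∃ t x, ofL X Y f t n x = z :=
  Module.DirectLimit.exists_of z

lemma Lt_ind {n : ℤ} {C : Lt X Y f n → Prop} (z : Lt X Y f n)
    (h : ∀ t x, C (ofL X Y f t n x)) : C z :=
  Module.DirectLimit.induction_on z h

lemma Lt_zero_exact {n : ℤ} {t : ℕ} {x : Ft X Y f t n} (h : ofL X Y f t n x = 0) :
    ∃ t', ∃ ht : t ≤ t', tmaps X Y f n t t' ht x = 0 :=
  Module.DirectLimit.of.zero_exact h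

noncomputable def dLt (n : ℤ) : Lt X Y f n →ₗ[K] Lt X Y f (n+1) :=
  Module.DirectLimit.lift K ℕ (fun t => Ft X Y f t n) (fun t t' h => tmaps X Y f n t t' h)
    (fun t => (ofL X Y f t (n+1)).comp ((towerT X Y f t).Z.dV n))
    (by
      intro t t' h x
      simp only [LinearMap.comp_apply]
      rw [tmaps_dV, ofL_tmaps])

lemma dLt_of (n : ℤ) (t : ℕ) (x : Ft X Y f t n) :
    dLt X Y f n (ofL X Y f t n x) = ofL X Y f t (n+1) ((towerT X Y f t).Z.dV n x) :=
  Module.DirectLimit.lift_of _ _ _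

noncomputable def rLa (p : ℤ) (a : A p) (n : ℤ) : Lt X Y f n →ₗ[K] Lt X Y f (p+n) :=
  Module.DirectLimit.lift K ℕ (fun t => Ft X Y f t n) (fun t t' h => tmaps X Y f n t t' h)
    (fun t => (ofL X Y f t (p+n)).comp ((towerT X Y f t).Z.ρ p n a))
    (by
      intro t t' h x
      simp only [LinearMap.comp_apply]
      rw [tmaps_rho, ofL_tmaps])

lemma rLa_of (p : ℤ) (a : A p) (n : ℤ) (t : ℕ) (x : Ft X Y f t n) :
    rLa X Y f p a n (ofL X Y f t n x)
      = ofL X Y f t (p+n) ((towerT X Y f t).Z.ρ p n a x) :=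
  Module.DirectLimit.lift_of _ _ _

noncomputable def rLt (p n : ℤ) : A p →ₗ[K] (Lt X Y f n →ₗ[K] Lt X Y f (p+n)) where
  toFun a := rLa X Y f p a n
  map_add' a b := by
    apply LinearMap.ext
    intro z
    show rLa X Y f p (a+b) n z = rLa X Y f p a n z + rLa X Y f p b n z
    induction z using Lt_ind with
    | h t x => rw [rLa_of, rLa_of, rLa_of, map_add, LinearMap.add_apply, map_add]
  map_smul' c a := by
    apply LinearMap.ext
    intro z
    show rLa X Y f p (c • a) n z = c • rLa X Y f p a n z
    induction z using Lt_ind with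
    | h t x => rw [rLa_of, rLa_of, map_smul, LinearMap.smul_apply, map_smul]

lemma gcast_ofL {n m : ℤ} (h : n = m) (t : ℕ) (x : Ft X Y f t n) :
    gcast (C := fun k => Lt X Y f k) h (ofL X Y f t n x)
      = ofL X Y f t m (gcast (C := fun k => Ft X Y f t k) h x) := by
  subst h; rfl

lemma ZL_dsq (n : ℤ) (v : Lt X Y f n) :
    dLt X Y f (n+1) (dLt X Y f n v) = 0 := by
  induction v using Lt_ind with
  | h t x => rw [dLt_of, dLt_of, (towerT X Y f t).Z.dV_sq, map_zero]

lemma ZL_leibniz (p n : ℤ) (a : A p) (v : Lt X Y f n) :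
    dLt X Y f (p+n) (rLt X Y f p n a v)
      = gcast (C := fun k => Lt X Y f k) (show p + 1 + n = p + n + 1 by ring)
          (rLt X Y f (p+1) n (DGLA.d (K := K) (A := A) p a) v)
        + ((-1:K)^p) • gcast (C := fun k => Lt X Y f k)
            (show p + (n + 1) = p + n + 1 by ring)
            (rLt X Y f p (n+1) a (dLt X Y f n v)) := by
  induction v using Lt_ind with
  | h t x =>
  show dLt X Y f (p+n) (rLa X Y f p a n (ofL X Y f t n x)) = _
  rw [rLa_of, dLt_of, (towerT X Y f t).Z.leibniz, map_add, map_smul]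
  show _ = gcast (C := fun k => Lt X Y f k) _ (rLa X Y f (p+1) (DGLA.d (K := K) (A := A) p a) n (ofL X Y f t n x))
        + ((-1:K)^p) • gcast (C := fun k => Lt X Y f k) _ (rLa X Y f p a (n+1) (dLt X Y f n (ofL X Y f t n x)))
  rw [dLt_of, rLa_of, rLa_of, gcast_ofL, gcast_ofL]
lemma ZL_compat (p q n : ℤ) (a : A p) (b : A q) (v : Lt X Y f n) :
    rLt X Y f (p+q) n (DGLA.bk (K := K) (A := A) p q a b) v
      = gcast (C := fun k => Lt X Y f k) (show p + (q + n) = p + q + n by ring)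
          (rLt X Y f p (q+n) a (rLt X Y f q n b v))
        + ((-1:K)^(p*q)) • gcast (C := fun k => Lt X Y f k)
            (show q + (p + n) = p + q + n by ring)
            (rLt X Y f q (p+n) b (rLt X Y f p n a v)) := by
  induction v using Lt_ind with
  | h t x =>
  show rLa X Y f (p+q) (DGLA.bk (K := K) (A := A) p q a b) n (ofL X Y f t n x) = _
  rw [rLa_of, (towerT X Y f t).Z.compat, map_add, map_smul]
  show _ = gcast (C := fun k => Lt X Y f k) _ (rLa X Y f p a (q+n) (rLa X Y f q b n (ofL X Y f t n x)))
        + ((-1:K)^(p*q)) • gcast (C := fun k => Lt X Y f k) _ (rLa X Y f q b (p+n) (rLa X Y f p a n (ofL X Y f t n x)))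
  rw [rLa_of, rLa_of, rLa_of, rLa_of, gcast_ofL, gcast_ofL]

/-- The colimit of the tower. -/
noncomputable def ZL : RepObj K A where
  V n := ModuleCat.of K (Lt X Y f n)
  dV := dLt X Y f
  ρ := rLt X Y f
  dV_sq := ZL_dsq X Y f
  leibniz := ZL_leibniz X Y f
  compat := ZL_compat X Y f


noncomputable def qf (n : ℤ) : Lt X Y f n →ₗ[K] (Y.V n : Type) :=
  Module.DirectLimit.lift K ℕ (fun t => Ft X Y f t n) (fun t t' h => tmaps X Y f n t t' h)
    (fun t => (towerT X Y f t).q.f n) (fun t t' h x => tmaps_q X Y f n t t' h x)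

lemma qf_of (n : ℤ) (t : ℕ) (x : Ft X Y f t n) :
    qf X Y f n (ofL X Y f t n x) = (towerT X Y f t).q.f n x :=
  Module.DirectLimit.lift_of _ _ _

noncomputable def qLim : ZL X Y f ⟶ Y where
  f := qf X Y f
  comm_d := by
    intro n
    show ∀ v : Lt X Y f n, qf X Y f (n+1) (dLt X Y f n v) = Y.dV n (qf X Y f n v)
    intro v
    induction v using Lt_ind with
    | h t x => rw [dLt_of, qf_of, qf_of, (towerT X Y f t).q.comm_d]
  comm_ρ := by
    intro p j a
    show ∀ v : Lt X Y f j, qf X Y f (p+j) (rLa X Y f p a j v) = Y.ρ p j a (qf X Y f j v)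
    intro v
    induction v using Lt_ind with
    | h t x => rw [rLa_of, qf_of, qf_of, (towerT X Y f t).q.comm_ρ]

noncomputable def ofHom (t : ℕ) : (towerT X Y f t).Z ⟶ ZL X Y f where
  f n := ofL X Y f t n
  comm_d := fun n x => (dLt_of X Y f n t x).symm
  comm_ρ := fun p j a x => (rLa_of X Y f p a j t x).symm

lemma ofHom_step (t : ℕ) : towerMap X Y f t ≫ ofHom X Y f (t+1) = ofHom X Y f t := by
  apply RepHom.ext
  funext n
  apply LinearMap.ext
  intro x
  show ofL X Y f (t+1) n ((towerMap X Y f t).f n x) = ofL X Y f t n x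
  rw [show (towerMap X Y f t).f n x = tmaps X Y f n t (t+1) (Nat.le_succ t) x from by
    rw [tmaps_succ X Y f n t t le_rfl, tmaps_self], ofL_tmaps]

lemma ofHom_q (t : ℕ) : ofHom X Y f t ≫ qLim X Y f = (towerT X Y f t).q := by
  apply RepHom.ext
  funext n
  apply LinearMap.ext
  intro x
  exact qf_of X Y f n t x

lemma bdr_ZL (n : ℤ) (w : Lt X Y f (n-1)) :
    bdr (ZL X Y f) n w = gcast (C := fun k => Lt X Y f k) (show n-1+1 = n by omega)
      (dLt X Y f (n-1) w) := by
  erw [bdr_apply]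
  rfl

lemma qLim_fac : (i0 X Y f ≫ ofHom X Y f 0) ≫ qLim X Y f = f := by
  erw [Category.assoc, ofHom_q]
  exact (T0_spec X Y f).2.2.2

lemma qLim_surj : RepHom.IsSurj (qLim X Y f) := by
  intro n y
  obtain ⟨x0, hx0⟩ := (T0_spec X Y f).2.2.1 n y
  refine ⟨ofL X Y f 0 n x0, ?_⟩
  show qf X Y f n (ofL X Y f 0 n x0) = y
  erw [qf_of]
  exact hx0

lemma qLim_qis : RepHom.IsQis (qLim X Y f) := by
  rw [isQis_iff]
  constructor
  · intro n
    show ∀ y : (Y.V n : Type), Y.dV n y = 0 → _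
    intro y hy
    set c : stepI (towerT X Y f 0) := Sum.inr ⟨n, ⟨y, hy⟩⟩ with hc
    set sph := genE (towerT X Y f 0).Z (stepI (towerT X Y f 0)) (stepdeg (towerT X Y f 0))
      (cgn (towerT X Y f 0).Z (stepI (towerT X Y f 0)) (stepdeg (towerT X Y f 0))
        (stepval (towerT X Y f 0))) c with hsph
    have hcycsph : (towerT X Y f 1).Z.dV n sph = 0 := by
      show dE (towerT X Y f 0).Z (stepI (towerT X Y f 0)) (stepdeg (towerT X Y f 0))
        (cgn (towerT X Y f 0).Z (stepI (towerT X Y f 0)) (stepdeg (towerT X Y f 0))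
          (stepval (towerT X Y f 0))) (stepdeg (towerT X Y f 0) c) sph = 0
      rw [cell_d_gen]
      rw [show stepval (towerT X Y f 0) c = 0 from rfl, map_zero]
    have hqsph : (towerT X Y f 1).q.f n sph = y := by
      show (towerT X Y f 1).q.f (stepdeg (towerT X Y f 0) c) sph = y
      exact cellUniv_gen (towerT X Y f 0).Z (stepI (towerT X Y f 0))
        (stepdeg (towerT X Y f 0)) (stepval (towerT X Y f 0)) Y (towerT X Y f 0).q
        (stepw (towerT X Y f 0)) (stepw_spec (towerT X Y f 0)) c
    refine ⟨ofL X Y f 1 n sph, 0, ?_, ?_⟩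
    · show dLt X Y f n (ofL X Y f 1 n sph) = 0
      erw [dLt_of, hcycsph, map_zero]
    · show qf X Y f n (ofL X Y f 1 n sph) = y + bdr Y n 0
      erw [qf_of, hqsph, map_zero, add_zero]
  · intro n
    show ∀ x : Lt X Y f n, dLt X Y f n x = 0 →
      (∃ z, qf X Y f n x = bdr Y n z) → ∃ w : Lt X Y f (n-1), x = bdr (ZL X Y f) n w
    intro x hx hex
    obtain ⟨y', hy'⟩ := hex
    obtain ⟨t, z, rfl⟩ := Lt_exists X Y f n x
    have h0 : ofL X Y f t (n+1) ((towerT X Y f t).Z.dV n z) = 0 := by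
      rw [← dLt_of]
      exact hx
    obtain ⟨t', ht, hz'⟩ := Lt_zero_exact X Y f h0
    set z' := tmaps X Y f n t t' ht z with hz'def
    have hz'c : (towerT X Y f t').Z.dV n z' = 0 := by
      rw [hz'def, tmaps_dV]
      exact hz'
    have hofz' : ofL X Y f t' n z' = ofL X Y f t n z := ofL_tmaps X Y f t t' ht n z
    have hqz' : (towerT X Y f t').q.f n z' = bdr Y n y' := by
      have h1 : qf X Y f n (ofL X Y f t' n z') = qf X Y f n (ofL X Y f t n z) := by
        rw [hofz']
      rw [qf_of, qf_of] at h1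
      rw [h1, ← qf_of X Y f n t z]
      exact hy'
    set c : stepI (towerT X Y f t') := Sum.inl ⟨n, ⟨z', hz'c, ⟨y', hqz'⟩⟩⟩ with hc
    set g := genE (towerT X Y f t').Z (stepI (towerT X Y f t')) (stepdeg (towerT X Y f t'))
      (cgn (towerT X Y f t').Z (stepI (towerT X Y f t')) (stepdeg (towerT X Y f t'))
        (stepval (towerT X Y f t'))) c with hg
    refine ⟨ofL X Y f (t'+1) (n-1) g, ?_⟩
    erw [bdr_ZL, dLt_of]
    have hdg : (towerT X Y f (t'+1)).Z.dV (n-1) g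
        = (towerMap X Y f t').f (n-1+1) (stepval (towerT X Y f t') c) := by
      show dE (towerT X Y f t').Z (stepI (towerT X Y f t')) (stepdeg (towerT X Y f t'))
        (cgn (towerT X Y f t').Z (stepI (towerT X Y f t')) (stepdeg (towerT X Y f t'))
          (stepval (towerT X Y f t'))) (stepdeg (towerT X Y f t') c) g
          = (towerMap X Y f t').f (stepdeg (towerT X Y f t') c + 1)
              (stepval (towerT X Y f t') c)
      exact cell_d_gen _ _ _ _ c
    rw [hdg]
    erw [show (towerMap X Y f t').f (n-1+1) (stepval (towerT X Y f t') c)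
      = tmaps X Y f (n-1+1) t' (t'+1) (Nat.le_succ t') (stepval (towerT X Y f t') c) from by
        erw [tmaps_succ X Y f (n-1+1) t' t' le_rfl, tmaps_self], ofL_tmaps]
    rw [show stepval (towerT X Y f t') c
      = gcast (C := fun k => Ft X Y f t' k) (show n = n-1+1 by omega) z' from rfl]
    rw [← gcast_ofL, gcast_trans]
    show ofL X Y f t n z = gcast (C := fun k => Lt X Y f k) _ (ofL X Y f t' n z')
    rw [show gcast (C := fun k => Lt X Y f k)
      ((show n = n-1+1 by omega).trans (show n-1+1 = n by omega)) (ofL X Y f t' n z')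
        = ofL X Y f t' n z' from rfl]
    exact hofz'.symm

section LiftSec

variable {E B : RepObj K A} (p : E ⟶ B) (hs : RepHom.IsSurj p) (hq : RepHom.IsQis p)
  (u : X ⟶ E) (v : ZL X Y f ⟶ B)
  (hsq : u ≫ p = (i0 X Y f ≫ ofHom X Y f 0) ≫ v)

noncomputable def L0 :
    {L : (towerT X Y f 0).Z ⟶ E // i0 X Y f ≫ L = u ∧ L ≫ p = ofHom X Y f 0 ≫ v} := by
  have hex := (T0_spec X Y f).1 p hs u (ofHom X Y f 0 ≫ v) (by erw [hsq, Category.assoc])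
  exact ⟨hex.choose, hex.choose_spec⟩

noncomputable def stepLift (t : ℕ)
    (prev : {L : (towerT X Y f t).Z ⟶ E // L ≫ p = ofHom X Y f t ≫ v}) :
    {L : (towerT X Y f (t+1)).Z ⟶ E //
      towerMap X Y f t ≫ L = prev.1 ∧ L ≫ p = ofHom X Y f (t+1) ≫ v} := by
  have hex := cell_extA (towerT X Y f t).Z (stepI (towerT X Y f t)) (stepdeg (towerT X Y f t))
    (stepval (towerT X Y f t)) p hs hq (stepval_cycle (towerT X Y f t)) prev.1
    (ofHom X Y f (t+1) ≫ v)
    (by rw [prev.2, ← ofHom_step X Y f t, Category.assoc]; rfl)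
  exact ⟨hex.choose, hex.choose_spec⟩

noncomputable def seqL : ∀ t : ℕ, {L : (towerT X Y f t).Z ⟶ E // L ≫ p = ofHom X Y f t ≫ v}
  | 0 => ⟨(L0 X Y f p hs u v hsq).1, (L0 X Y f p hs u v hsq).2.2⟩
  | (t+1) =>
      ⟨(stepLift X Y f p hs hq v t (seqL t)).1, (stepLift X Y f p hs hq v t (seqL t)).2.2⟩

lemma seqL_compat (t : ℕ) :
    towerMap X Y f t ≫ (seqL X Y f p hs hq u v hsq (t+1)).1
      = (seqL X Y f p hs hq u v hsq t).1 :=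
  (stepLift X Y f p hs hq v t (seqL X Y f p hs hq u v hsq t)).2.1

lemma seqL_tmaps (n : ℤ) (t t' : ℕ) (h : t ≤ t') (x : Ft X Y f t n) :
    (seqL X Y f p hs hq u v hsq t').1.f n (tmaps X Y f n t t' h x)
      = (seqL X Y f p hs hq u v hsq t).1.f n x := by
  induction t', h using Nat.le_induction with
  | base => rw [tmaps_self]
  | succ t' h ih =>
      rw [tmaps_succ X Y f n t t' h, ← ih]
      have := hom_congr (seqL_compat X Y f p hs hq u v hsq t') n
        (tmaps X Y f n t t' h x)
      rw [comp_f] at this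
      rw [this]

noncomputable def LliftF (n : ℤ) : Lt X Y f n →ₗ[K] (E.V n : Type) :=
  Module.DirectLimit.lift K ℕ (fun t => Ft X Y f t n)
    (fun t t' h => tmaps X Y f n t t' h)
    (fun t => (seqL X Y f p hs hq u v hsq t).1.f n)
    (fun t t' h x => seqL_tmaps X Y f p hs hq u v hsq n t t' h x)

lemma LliftF_of (n : ℤ) (t : ℕ) (x : Ft X Y f t n) :
    LliftF X Y f p hs hq u v hsq n (ofL X Y f t n x)
      = (seqL X Y f p hs hq u v hsq t).1.f n x :=
  Module.DirectLimit.lift_of _ _ _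

noncomputable def Llift : ZL X Y f ⟶ E where
  f := LliftF X Y f p hs hq u v hsq
  comm_d := by
    intro n
    show ∀ w : Lt X Y f n, LliftF X Y f p hs hq u v hsq (n+1) (dLt X Y f n w)
      = E.dV n (LliftF X Y f p hs hq u v hsq n w)
    intro w
    induction w using Lt_ind with
    | h t x =>
        rw [dLt_of, LliftF_of, LliftF_of, (seqL X Y f p hs hq u v hsq t).1.comm_d]
  comm_ρ := by
    intro pp j a
    show ∀ w : Lt X Y f j, LliftF X Y f p hs hq u v hsq (pp+j) (rLa X Y f pp a j w)
      = E.ρ pp j a (LliftF X Y f p hs hq u v hsq j w)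
    intro w
    induction w using Lt_ind with
    | h t x =>
        rw [rLa_of, LliftF_of, LliftF_of, (seqL X Y f p hs hq u v hsq t).1.comm_ρ]

lemma Llift_left :
    (i0 X Y f ≫ ofHom X Y f 0) ≫ Llift X Y f p hs hq u v hsq = u := by
  apply RepHom.ext
  funext n
  apply LinearMap.ext
  intro m
  show LliftF X Y f p hs hq u v hsq n (ofL X Y f 0 n ((i0 X Y f).f n m)) = u.f n m
  erw [LliftF_of]
  have := hom_congr (L0 X Y f p hs u v hsq).2.1 n m
  erw [comp_f] at this
  exact this

lemma Llift_right : Llift X Y f p hs hq u v hsq ≫ p = v := by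
  apply RepHom.ext
  funext n
  apply LinearMap.ext
  intro w
  show p.f n (LliftF X Y f p hs hq u v hsq n w) = v.f n w
  induction w using Lt_ind with
  | h t x =>
      rw [LliftF_of]
      have := hom_congr (seqL X Y f p hs hq u v hsq t).2 n x
      rw [comp_f] at this
      rw [this, comp_f]
      rfl

end LiftSec

end Tower

/-- Factorization of an arbitrary map as a cofibration followed by a trivial fibration. -/
lemma factor_cf {X Y : RepObj K A} (f : X ⟶ Y) :
    ∃ (Z : RepObj K A) (i : X ⟶ Z) (q : Z ⟶ Y),
      (∀ ⦃E B : RepObj K A⦄ (p : E ⟶ B), RepHom.IsSurj p → RepHom.IsQis p →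
        ∀ (u : X ⟶ E) (v : Z ⟶ B), u ≫ p = i ≫ v → ∃ h : Z ⟶ E, i ≫ h = u ∧ h ≫ p = v)
      ∧ RepHom.IsSurj q ∧ RepHom.IsQis q ∧ i ≫ q = f := by
  refine ⟨ZL X Y f, i0 X Y f ≫ ofHom X Y f 0, qLim X Y f, ?_, qLim_surj X Y f,
    qLim_qis X Y f, qLim_fac X Y f⟩
  intro E B p hs hq u v hsq
  exact ⟨Llift X Y f p hs hq u v hsq, Llift_left X Y f p hs hq u v hsq,
    Llift_right X Y f p hs hq u v hsq⟩



end Stmt16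

end Aux2

/-- The category of representations of a dgla `𝔤` over a field of
characteristic zero carries a model structure whose weak equivalences are the
quasi-isomorphisms and whose fibrations are the degreewise surjections; in particular every
object is fibrant (the unique map to the zero object is a fibration). -/
theorem stmt16 {K : Type} [Field K] [CharZero K] (A : ℤ → Type)
    [∀ i, AddCommGroup (A i)] [∀ i, Module K (A i)] [DGLA K A] :
    ∃ M : ModelStructure (RepObj K A),
      (∀ (X Y : RepObj K A) (φ : X ⟶ Y), M.W φ ↔ RepHom.IsQis φ) ∧
      (∀ (X Y : RepObj K A) (φ : X ⟶ Y), M.Fib φ ↔ RepHom.IsSurj φ) ∧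
      (∀ (X : RepObj K A) (φ : X ⟶ zeroRep K A), M.Fib φ) := by
  classical
  refine ⟨{
    W := fun {X Y} φ => RepHom.IsQis φ
    Fib := fun {X Y} φ => RepHom.IsSurj φ
    Cof := fun {P Q} i => ∀ ⦃E B : RepObj K A⦄ (p : E ⟶ B),
      RepHom.IsSurj p → RepHom.IsQis p → ∀ (u : P ⟶ E) (v : Q ⟶ B),
        u ≫ p = i ≫ v → ∃ h : Q ⟶ E, i ≫ h = u ∧ h ≫ p = v
    w_comp := fun f g hf hg => Stmt16.qis_comp f g hf hg
    w_cancel_left := fun f g h hf => Stmt16.qis_cancel_left f g h hf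
    w_cancel_right := fun f g h hg => Stmt16.qis_cancel_right f g h hg
    w_retract := fun f g hr hg => Stmt16.qis_retract f g hr hg
    fib_retract := fun f g hr hg => Stmt16.surj_retract f g hr hg
    cof_retract := by
      intro X Y X' Y' f g hr hg
      obtain ⟨iX, rX, iY, rY, hX, hY, h1, h2⟩ := hr
      intro E B p hs hq u v hsq
      obtain ⟨h', hh1, hh2⟩ := hg p hs hq (rX ≫ u) (rY ≫ v) (by
        rw [Category.assoc, hsq, ← Category.assoc, h2, Category.assoc])
      refine ⟨iY ≫ h', ?_, ?_⟩
      · rw [← Category.assoc, ← h1, Category.assoc, hh1, ← Category.assoc, hX,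
          Category.id_comp]
      · rw [Category.assoc, hh2, ← Category.assoc, hY, Category.id_comp]
    lift := by
      intro P Q Xx Yy i p hcof hfib hor u v hsq
      rcases hor with hi | hp
      · obtain ⟨Z, j, q, hjs, hjq, hqs, hfac⟩ := Stmt16.factor_tcf i
        have hqqis : RepHom.IsQis q :=
          Stmt16.qis_cancel_left j q (by rw [hfac]; exact hi) hjq
        obtain ⟨s, hs1, hs2⟩ := hcof q hqs hqqis j (𝟙 Q) (by
          rw [Category.comp_id]; exact hfac)
        obtain ⟨ℓ, hl1, hl2⟩ := hjs p hfib u (q ≫ v) (by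
          rw [hsq, ← hfac, Category.assoc])
        refine ⟨s ≫ ℓ, ?_, ?_⟩
        · rw [← Category.assoc, hs1, hl1]
        · rw [Category.assoc, hl2, ← Category.assoc, hs2, Category.id_comp]
      · exact hcof p hfib hp u v hsq
    factor_cof_triv_fib := by
      intro X Y f
      obtain ⟨Z, i, q, hlift, hsurj, hqis, hfac⟩ := Stmt16.factor_cf f
      exact ⟨Z, i, q, hlift, hsurj, hqis, hfac⟩
    factor_triv_cof_fib := by
      intro X Y f
      obtain ⟨Z, i, q, hsllp, hiq, hqs, hfac⟩ := Stmt16.factor_tcf f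
      exact ⟨Z, i, q, fun E B p hs _ u v hsq => hsllp p hs u v hsq, hiq, hqs, hfac⟩
      }, ?_, ?_, ?_⟩
  · intro X Y φ
    exact Iff.rfl
  · intro X Y φ
    exact Iff.rfl
  · intro X φ
    intro i y
    refine ⟨0, ?_⟩
    show (φ.f i) 0 = y
    have : Subsingleton ((zeroRep K A).V i : Type) := by
      show Subsingleton PUnit
      infer_instance
    exact this.elim _ _

end RepCategory
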